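/- arXiv:0809.0424 — 3 statements merged into one kernel-verified Lean document; each statement's English description precedes it below -/
import Mathlib

section
/- There exist complex (signed) Borel measures μ and ν on ℝ and a Borel function f : ℝ → ℂ such that f is integrable with respect to the convolution μ*ν, but the function (x,y) ↦ f(x+y) is not integrable with respect to the total variation |μ×ν| of the product measure. (Hence the converse of the change-of-variables implication fails for nonpositive measures.) -/
open scoped ENNReal NNReal


open MeasureTheory

noncomputable section
namespace Paper

variable {α : Type*} [MeasurableSpace α]

def posRe (c : ComplexMeasure α) : Measure α := (ComplexMeasure.re c).toJordanDecomposition.posPart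
def negRe (c : ComplexMeasure α) : Measure α := (ComplexMeasure.re c).toJordanDecomposition.negPart
def posIm (c : ComplexMeasure α) : Measure α := (ComplexMeasure.im c).toJordanDecomposition.posPart
def negIm (c : ComplexMeasure α) : Measure α := (ComplexMeasure.im c).toJordanDecomposition.negPart

/-- Integrability with respect to a complex measure: integrability with respect to
each of the four positive parts, equivalently w.r.t. their sum. -/
def cvar (c : ComplexMeasure α) : Measure α := posRe c + negRe c + posIm c + negIm c

def CIntegrable (f : α → ℂ) (c : ComplexMeasure α) : Prop := Integrable f (cvar c)

/-- The integral with respect to a complex measure. -/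
def cintegral (f : α → ℂ) (c : ComplexMeasure α) : ℂ :=
  ((∫ x, f x ∂(posRe c)) - (∫ x, f x ∂(negRe c))) +
    Complex.I * ((∫ x, f x ∂(posIm c)) - (∫ x, f x ∂(negIm c)))

/-- The product of two signed measures, via Jordan decompositions. -/
def sprod {β : Type*} [MeasurableSpace β] (s : SignedMeasure α) (t : SignedMeasure β) :
    SignedMeasure (α × β) :=
  ((s.toJordanDecomposition.posPart.prod t.toJordanDecomposition.posPart).toSignedMeasure +
    (s.toJordanDecomposition.negPart.prod t.toJordanDecomposition.negPart).toSignedMeasure) -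
  ((s.toJordanDecomposition.posPart.prod t.toJordanDecomposition.negPart).toSignedMeasure +
    (s.toJordanDecomposition.negPart.prod t.toJordanDecomposition.posPart).toSignedMeasure)

/-- The product of two complex measures. -/
def cprod {β : Type*} [MeasurableSpace β] (μ : ComplexMeasure α) (ν : ComplexMeasure β) :
    ComplexMeasure (α × β) :=
  SignedMeasure.toComplexMeasure
    (sprod (ComplexMeasure.re μ) (ComplexMeasure.re ν) -
      sprod (ComplexMeasure.im μ) (ComplexMeasure.im ν))
    (sprod (ComplexMeasure.re μ) (ComplexMeasure.im ν) +
      sprod (ComplexMeasure.im μ) (ComplexMeasure.re ν))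

/-- The convolution of two complex Borel measures on ℝ: the pushforward of the
product measure under addition. -/
def conv (μ ν : ComplexMeasure ℝ) : ComplexMeasure ℝ :=
  (cprod μ ν).map (fun p : ℝ × ℝ => p.1 + p.2)

/-- The (genuine) total variation measure of a complex measure. -/
def tvar (c : ComplexMeasure α) : Measure α :=
  (cvar c).withDensity (fun x => ENNReal.ofReal ‖ComplexMeasure.rnDeriv c (cvar c) x‖)


instance (c : ComplexMeasure α) : IsFiniteMeasure (cvar c) := by
  unfold cvar posRe negRe posIm negIm; infer_instance

lemma re_ac (c : ComplexMeasure α) :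
    ComplexMeasure.re c ≪ᵥ (cvar c).toENNRealVectorMeasure := by
  refine VectorMeasure.AbsolutelyContinuous.mk (fun i hi h0 => ?_)
  rw [Measure.toENNRealVectorMeasure_apply_measurable hi] at h0
  have hpos : posRe c i = 0 ∧ negRe c i = 0 := by
    have : posRe c i + negRe c i + posIm c i + negIm c i = 0 := by
      simpa [cvar, Measure.add_apply] using h0
    constructor <;> [skip; skip] <;>
      · have h1 := this
        rw [add_eq_zero, add_eq_zero, add_eq_zero] at h1
        tauto
  have := (ComplexMeasure.re c).toSignedMeasure_toJordanDecomposition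
  calc ComplexMeasure.re c i
      = (ComplexMeasure.re c).toJordanDecomposition.toSignedMeasure i := by rw [this]
    _ = 0 := by
        rw [JordanDecomposition.toSignedMeasure, VectorMeasure.sub_apply,
          Measure.toSignedMeasure_apply_measurable hi,
          Measure.toSignedMeasure_apply_measurable hi]
        simp [posRe, negRe] at hpos ⊢
        simp [measureReal_def, hpos.1, hpos.2]

/-- Key lower bound: `tvar` dominates `ofReal |re c ·|` on measurable sets. -/
lemma ofReal_abs_re_le_tvar (c : ComplexMeasure α) {E : Set α} (hE : MeasurableSet E) :
    ENNReal.ofReal |ComplexMeasure.re c E| ≤ tvar c E := by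
  set μ := cvar c with hμ
  have hrep : μ.withDensityᵥ ((ComplexMeasure.re c).rnDeriv μ) = ComplexMeasure.re c :=
    SignedMeasure.withDensityᵥ_rnDeriv_eq _ _ (re_ac c)
  have hint : Integrable ((ComplexMeasure.re c).rnDeriv μ) μ :=
    SignedMeasure.integrable_rnDeriv _ _
  have h1 : ComplexMeasure.re c E = ∫ x in E, (ComplexMeasure.re c).rnDeriv μ x ∂μ := by
    conv_lhs => rw [← hrep]
    rw [withDensityᵥ_apply hint hE]
  rw [h1]
  have h2 : |∫ x in E, (ComplexMeasure.re c).rnDeriv μ x ∂μ|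
      ≤ ∫ x in E, |(ComplexMeasure.re c).rnDeriv μ x| ∂μ := by
    simpa [Real.norm_eq_abs] using
      norm_integral_le_integral_norm (μ := μ.restrict E) ((ComplexMeasure.re c).rnDeriv μ)
  calc ENNReal.ofReal |∫ x in E, (ComplexMeasure.re c).rnDeriv μ x ∂μ|
      ≤ ENNReal.ofReal (∫ x in E, |(ComplexMeasure.re c).rnDeriv μ x| ∂μ) :=
        ENNReal.ofReal_le_ofReal h2
    _ = ∫⁻ x in E, ENNReal.ofReal |(ComplexMeasure.re c).rnDeriv μ x| ∂μ :=
        ofReal_integral_eq_lintegral_ofReal (hint.abs.restrict (s := E))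
          (Filter.Eventually.of_forall fun x => abs_nonneg _)
    _ ≤ ∫⁻ x in E, ENNReal.ofReal ‖ComplexMeasure.rnDeriv c μ x‖ ∂μ := by
        refine lintegral_mono fun x => ENNReal.ofReal_le_ofReal ?_
        have : (ComplexMeasure.rnDeriv c μ x).re = (ComplexMeasure.re c).rnDeriv μ x := rfl
        rw [← this]
        exact Complex.abs_re_le_norm _
    _ = tvar c E := by rw [tvar, withDensity_apply _ hE]


def aw : ℕ → ℝ≥0∞ := fun k => (2:ℝ≥0∞)⁻¹ ^ k

def muP : Measure ℝ := Measure.sum fun k : ℕ =>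
  aw k • (Measure.dirac (2*(k:ℝ)) + Measure.dirac (2*(k:ℝ)+1))
def nuP : Measure ℝ := Measure.sum fun k : ℕ => aw k • Measure.dirac (-(2*(k:ℝ)))
def nuN : Measure ℝ := Measure.sum fun k : ℕ => aw k • Measure.dirac (-(2*(k:ℝ))-1)

lemma aw_ne_top (k : ℕ) : aw k ≠ ⊤ := by
  simp [aw]

lemma tsum_aw_ne_top : (∑' k, aw k) ≠ ⊤ := by
  rw [show aw = fun k => (2:ℝ≥0∞)⁻¹ ^ k from rfl, ENNReal.tsum_geometric, ENNReal.one_sub_inv_two]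
  simp

instance : IsFiniteMeasure muP := by
  constructor
  rw [muP, Measure.sum_apply _ MeasurableSet.univ]
  calc ∑' k, (aw k • (Measure.dirac (2*(k:ℝ)) + Measure.dirac (2*(k:ℝ)+1))) Set.univ
      = ∑' k, aw k * 2 := by
        congr 1; funext k
        simp [Measure.smul_apply]; ring
    _ = (∑' k, aw k) * 2 := ENNReal.tsum_mul_right
    _ < ⊤ := ENNReal.mul_lt_top (lt_of_le_of_ne le_top tsum_aw_ne_top) (by norm_num)

instance : IsFiniteMeasure nuP := by
  constructor
  rw [nuP, Measure.sum_apply _ MeasurableSet.univ]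
  calc ∑' k, (aw k • Measure.dirac (-(2*(k:ℝ)))) Set.univ
      = ∑' k, aw k := by congr 1; funext k; simp [Measure.smul_apply]
    _ < ⊤ := lt_of_le_of_ne le_top tsum_aw_ne_top

instance : IsFiniteMeasure nuN := by
  constructor
  rw [nuN, Measure.sum_apply _ MeasurableSet.univ]
  calc ∑' k, (aw k • Measure.dirac (-(2*(k:ℝ))-1)) Set.univ
      = ∑' k, aw k := by congr 1; funext k; simp [Measure.smul_apply]
    _ < ⊤ := lt_of_le_of_ne le_top tsum_aw_ne_top

lemma muP_even (m : ℕ) : muP {(2*(m:ℝ))} = aw m := by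
  rw [muP, Measure.sum_apply _ (measurableSet_singleton _)]
  rw [tsum_eq_single m]
  · have h1 : (2*(m:ℝ)) ∈ ({2*(m:ℝ)} : Set ℝ) := rfl
    have h2 : (2*(m:ℝ)+1) ∉ ({2*(m:ℝ)} : Set ℝ) := by
      simp only [Set.mem_singleton_iff]; intro h; linarith
    simp [Measure.smul_apply, Measure.dirac_apply, Set.indicator, h2]
  · intro k hk
    have h1 : (2*(k:ℝ)) ∉ ({2*(m:ℝ)} : Set ℝ) := by
      simp only [Set.mem_singleton_iff]
      intro h
      exact hk (by exact_mod_cast (by linarith : (k:ℝ) = m))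
    have h2 : (2*(k:ℝ)+1) ∉ ({2*(m:ℝ)} : Set ℝ) := by
      simp only [Set.mem_singleton_iff]
      intro h
      have : (2*(k:ℤ)+1 : ℤ) = 2*m := by exact_mod_cast h
      omega
    simp [Measure.smul_apply, Measure.dirac_apply, Set.indicator, h1, h2]

lemma nuP_zero : nuP {(0:ℝ)} = 1 := by
  rw [nuP, Measure.sum_apply _ (measurableSet_singleton _)]
  rw [tsum_eq_single 0]
  · simp [Measure.smul_apply, Measure.dirac_apply, aw]
  · intro k hk
    have h1 : (-(2*(k:ℝ))) ∉ ({(0:ℝ)} : Set ℝ) := by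
      simp only [Set.mem_singleton_iff]
      intro h
      exact hk (by exact_mod_cast (by linarith : (k:ℝ) = 0))
    simp [Measure.smul_apply, Measure.dirac_apply, Set.indicator, h1]

lemma nuN_zero : nuN {(0:ℝ)} = 0 := by
  rw [nuN, Measure.sum_apply _ (measurableSet_singleton _)]
  have : ∀ k : ℕ, (aw k • Measure.dirac (-(2*(k:ℝ))-1)) {(0:ℝ)} = 0 := by
    intro k
    have h1 : (-(2*(k:ℝ))-1) ∉ ({(0:ℝ)} : Set ℝ) := by
      simp only [Set.mem_singleton_iff]
      intro h
      have : (k:ℝ) ≥ 0 := k.cast_nonneg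
      linarith
    simp [Measure.smul_apply, Measure.dirac_apply, Set.indicator, h1]
  simp [this]


def sMu : SignedMeasure ℝ := muP.toSignedMeasure
def sNu : SignedMeasure ℝ := nuP.toSignedMeasure - nuN.toSignedMeasure
def Mu : ComplexMeasure ℝ := sMu.toComplexMeasure 0
def Nu : ComplexMeasure ℝ := sNu.toComplexMeasure 0

lemma nuP_perp_nuN : nuP ⟂ₘ nuN := by
  refine ⟨Set.range (fun k : ℕ => -(2*(k:ℝ))-1), (Set.countable_range _).measurableSet, ?_, ?_⟩
  · rw [nuP, Measure.sum_apply _ (Set.countable_range _).measurableSet]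
    have : ∀ k : ℕ, (aw k • Measure.dirac (-(2*(k:ℝ))))
        (Set.range (fun k : ℕ => -(2*(k:ℝ))-1)) = 0 := by
      intro k
      have h1 : (-(2*(k:ℝ))) ∉ Set.range (fun k : ℕ => -(2*(k:ℝ))-1) := by
        rintro ⟨l, hl⟩
        have hl' : -(2*(l:ℝ))-1 = -(2*(k:ℝ)) := hl
        have : -(2*(l:ℤ))-1 = -(2*(k:ℤ)) := by exact_mod_cast hl'
        omega
      simp [Measure.smul_apply, Measure.dirac_apply, Set.indicator, h1]
    simp [this]
  · rw [nuN, Measure.sum_apply _ (Set.countable_range _).measurableSet.compl]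
    have : ∀ k : ℕ, (aw k • Measure.dirac (-(2*(k:ℝ))-1))
        (Set.range (fun k : ℕ => -(2*(k:ℝ))-1))ᶜ = 0 := by
      intro k
      have h1 : (-(2*(k:ℝ))-1) ∈ Set.range (fun k : ℕ => -(2*(k:ℝ))-1) := ⟨k, rfl⟩
      simp [Measure.smul_apply, Measure.dirac_apply, Set.indicator, h1]
    simp [this]

lemma jordan_mu : (ComplexMeasure.re Mu).toJordanDecomposition
    = JordanDecomposition.mk muP 0 .zero_right := by
  apply SignedMeasure.toJordanDecomposition_eq
  rw [Mu, SignedMeasure.re_toComplexMeasure]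
  show sMu = muP.toSignedMeasure - (0 : Measure ℝ).toSignedMeasure
  rw [Measure.toSignedMeasure_zero, sub_zero, sMu]

lemma jordan_nu : (ComplexMeasure.re Nu).toJordanDecomposition
    = JordanDecomposition.mk nuP nuN nuP_perp_nuN := by
  apply SignedMeasure.toJordanDecomposition_eq
  rw [Nu, SignedMeasure.re_toComplexMeasure]
  rfl

lemma im_mu : ComplexMeasure.im Mu = 0 := SignedMeasure.im_toComplexMeasure _ _
lemma im_nu : ComplexMeasure.im Nu = 0 := SignedMeasure.im_toComplexMeasure _ _

lemma zero_jordan_posPart : (0 : SignedMeasure ℝ).toJordanDecomposition.posPart = 0 := by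
  rw [SignedMeasure.toJordanDecomposition_zero, JordanDecomposition.zero_posPart]

lemma zero_jordan_negPart : (0 : SignedMeasure ℝ).toJordanDecomposition.negPart = 0 := by
  rw [SignedMeasure.toJordanDecomposition_zero, JordanDecomposition.zero_negPart]

lemma sprod_zero_left (t : SignedMeasure ℝ) : sprod (0 : SignedMeasure ℝ) t = 0 := by
  rw [sprod]
  simp only [zero_jordan_posPart, zero_jordan_negPart, Measure.zero_prod,
    Measure.toSignedMeasure_zero]
  simp

lemma sprod_zero_right (s : SignedMeasure ℝ) : sprod s (0 : SignedMeasure ℝ) = 0 := by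
  rw [sprod]
  simp only [zero_jordan_posPart, zero_jordan_negPart, Measure.prod_zero,
    Measure.toSignedMeasure_zero]
  simp

def PP : Measure (ℝ × ℝ) := muP.prod nuP
def NN : Measure (ℝ × ℝ) := muP.prod nuN

instance : IsFiniteMeasure PP := by unfold PP; infer_instance
instance : IsFiniteMeasure NN := by unfold NN; infer_instance

lemma mu_jordan_posPart : (ComplexMeasure.re Mu).toJordanDecomposition.posPart = muP := by
  rw [jordan_mu]
lemma mu_jordan_negPart : (ComplexMeasure.re Mu).toJordanDecomposition.negPart = 0 := by
  rw [jordan_mu]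
lemma nu_jordan_posPart : (ComplexMeasure.re Nu).toJordanDecomposition.posPart = nuP := by
  rw [jordan_nu]
lemma nu_jordan_negPart : (ComplexMeasure.re Nu).toJordanDecomposition.negPart = nuN := by
  rw [jordan_nu]

lemma re_cprod : ComplexMeasure.re (cprod Mu Nu) = PP.toSignedMeasure - NN.toSignedMeasure := by
  rw [cprod, SignedMeasure.re_toComplexMeasure, im_mu, im_nu, sprod_zero_left, sub_zero, sprod]
  simp only [mu_jordan_posPart, mu_jordan_negPart, nu_jordan_posPart, nu_jordan_negPart,
    Measure.zero_prod, Measure.toSignedMeasure_zero]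
  show PP.toSignedMeasure + 0 - (NN.toSignedMeasure + 0) = _
  rw [add_zero, add_zero]

lemma im_cprod : ComplexMeasure.im (cprod Mu Nu) = 0 := by
  rw [cprod, SignedMeasure.im_toComplexMeasure, im_mu, im_nu, sprod_zero_left, sprod_zero_right,
    add_zero]

lemma re_map (c : ComplexMeasure (ℝ × ℝ)) {φ : ℝ × ℝ → ℝ} (hφ : Measurable φ) :
    ComplexMeasure.re (c.map φ) = (ComplexMeasure.re c).map φ := by
  ext i hi
  have h1 : ComplexMeasure.re (c.map φ) i = ((c.map φ) i).re := rfl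
  have h2 : ComplexMeasure.re c (φ ⁻¹' i) = (c (φ ⁻¹' i)).re := rfl
  rw [h1, VectorMeasure.map_apply _ hφ hi, VectorMeasure.map_apply _ hφ hi, h2]

lemma im_map (c : ComplexMeasure (ℝ × ℝ)) {φ : ℝ × ℝ → ℝ} (hφ : Measurable φ) :
    ComplexMeasure.im (c.map φ) = (ComplexMeasure.im c).map φ := by
  ext i hi
  have h1 : ComplexMeasure.im (c.map φ) i = ((c.map φ) i).im := rfl
  have h2 : ComplexMeasure.im c (φ ⁻¹' i) = (c (φ ⁻¹' i)).im := rfl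
  rw [h1, VectorMeasure.map_apply _ hφ hi, VectorMeasure.map_apply _ hφ hi, h2]

lemma smap_sub (s t : SignedMeasure (ℝ × ℝ)) {φ : ℝ × ℝ → ℝ} (hφ : Measurable φ) :
    (s - t).map φ = s.map φ - t.map φ := by
  ext i hi
  rw [VectorMeasure.map_apply _ hφ hi, VectorMeasure.sub_apply, VectorMeasure.sub_apply,
    VectorMeasure.map_apply _ hφ hi, VectorMeasure.map_apply _ hφ hi]

lemma toSM_map (μ : Measure (ℝ × ℝ)) [IsFiniteMeasure μ] {φ : ℝ × ℝ → ℝ} (hφ : Measurable φ) :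
    μ.toSignedMeasure.map φ = (μ.map φ).toSignedMeasure := by
  ext i hi
  rw [VectorMeasure.map_apply _ hφ hi, Measure.toSignedMeasure_apply_measurable (hφ hi),
    Measure.toSignedMeasure_apply_measurable hi, measureReal_def, measureReal_def, Measure.map_apply hφ hi]

def addF : ℝ × ℝ → ℝ := fun p => p.1 + p.2
lemma addF_meas : Measurable addF := measurable_add

def AA : Measure ℝ := PP.map addF
def BB : Measure ℝ := NN.map addF

instance : IsFiniteMeasure AA := by unfold AA; infer_instance
instance : IsFiniteMeasure BB := by unfold BB; infer_instance

lemma re_conv : ComplexMeasure.re (conv Mu Nu)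
    = AA.toSignedMeasure - BB.toSignedMeasure := by
  rw [conv]
  rw [show (fun p : ℝ × ℝ => p.1 + p.2) = addF from rfl]
  rw [re_map _ addF_meas, re_cprod, smap_sub _ _ addF_meas, toSM_map _ addF_meas,
    toSM_map _ addF_meas]
  rfl

lemma im_conv : ComplexMeasure.im (conv Mu Nu) = 0 := by
  rw [conv]
  rw [show (fun p : ℝ × ℝ => p.1 + p.2) = addF from rfl]
  rw [im_map _ addF_meas, im_cprod, VectorMeasure.map_zero]

def Sev : Set ℝ := Set.range (fun m : ℤ => (2*(m:ℝ)))

lemma Sev_meas : MeasurableSet Sev := (Set.countable_range _).measurableSet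

lemma odd_notin_Sev {j : ℤ} {x : ℝ} (hx : x = 2*(j:ℝ)+1) : x ∉ Sev := by
  rintro ⟨m, hm⟩
  rw [hx] at hm
  have hm' : 2*(m:ℝ) = 2*(j:ℝ)+1 := hm
  have : 2*(m:ℤ) = 2*j+1 := by exact_mod_cast hm'
  omega

lemma nuP_T {U : Set ℝ} (hU : MeasurableSet U) :
    nuP U = ∑' l : ℕ, aw l * U.indicator 1 (-(2*(l:ℝ))) := by
  rw [nuP, Measure.sum_apply _ hU]
  congr 1; funext l
  rw [Measure.smul_apply, Measure.dirac_apply, smul_eq_mul]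

lemma nuN_T {U : Set ℝ} (hU : MeasurableSet U) :
    nuN U = ∑' l : ℕ, aw l * U.indicator 1 (-(2*(l:ℝ))-1) := by
  rw [nuN, Measure.sum_apply _ hU]
  congr 1; funext l
  rw [Measure.smul_apply, Measure.dirac_apply, smul_eq_mul]

lemma AB_eq {F : Set ℝ} (hF : MeasurableSet F) (hFS : F ⊆ Sev) : AA F = BB F := by
  have hpre : MeasurableSet (addF ⁻¹' F) := addF_meas hF
  rw [AA, BB, Measure.map_apply addF_meas hF, Measure.map_apply addF_meas hF, PP, NN,
    Measure.prod_apply hpre, Measure.prod_apply hpre]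
  have hTmk : ∀ x : ℝ, Prod.mk x ⁻¹' (addF ⁻¹' F) = {y : ℝ | x + y ∈ F} := fun x => rfl
  have hTmeas : ∀ x : ℝ, MeasurableSet {y : ℝ | x + y ∈ F} :=
    fun x => (measurable_id.const_add x) hF
  simp_rw [hTmk]
  rw [muP, lintegral_sum_measure, lintegral_sum_measure]
  congr 1; funext k
  rw [lintegral_smul_measure, lintegral_smul_measure, lintegral_add_measure,
    lintegral_add_measure, lintegral_dirac, lintegral_dirac, lintegral_dirac, lintegral_dirac]
  have hP1 : nuP {y : ℝ | (2*(k:ℝ)+1) + y ∈ F} = 0 := by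
    rw [nuP_T (hTmeas _)]
    have : ∀ l : ℕ, ({y : ℝ | (2*(k:ℝ)+1) + y ∈ F}).indicator (1 : ℝ → ℝ≥0∞) (-(2*(l:ℝ))) = 0 := by
      intro l
      apply Set.indicator_of_notMem
      intro hmem
      exact odd_notin_Sev (j := (k:ℤ) - l) (by push_cast; ring) (hFS hmem)
    simp [this]
  have hN1 : nuN {y : ℝ | (2*(k:ℝ)) + y ∈ F} = 0 := by
    rw [nuN_T (hTmeas _)]
    have : ∀ l : ℕ, ({y : ℝ | (2*(k:ℝ)) + y ∈ F}).indicator (1 : ℝ → ℝ≥0∞) (-(2*(l:ℝ))-1) = 0 := by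
      intro l
      apply Set.indicator_of_notMem
      intro hmem
      exact odd_notin_Sev (j := (k:ℤ) - l - 1) (by push_cast; ring) (hFS hmem)
    simp [this]
  have hPN : nuN {y : ℝ | (2*(k:ℝ)+1) + y ∈ F} = nuP {y : ℝ | (2*(k:ℝ)) + y ∈ F} := by
    rw [nuN_T (hTmeas _), nuP_T (hTmeas _)]
    congr 1; funext l
    congr 1
    have hpt : (2*(k:ℝ)+1) + (-(2*(l:ℝ))-1) = (2*(k:ℝ)) + (-(2*(l:ℝ))) := by ring
    by_cases hmem : (2*(k:ℝ)) + (-(2*(l:ℝ))) ∈ F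
    · rw [Set.indicator_of_mem (show (-(2*(l:ℝ))-1) ∈ {y : ℝ | (2*(k:ℝ)+1) + y ∈ F} by
        show (2*(k:ℝ)+1) + (-(2*(l:ℝ))-1) ∈ F; rw [hpt]; exact hmem),
        Set.indicator_of_mem (show (-(2*(l:ℝ))) ∈ {y : ℝ | (2*(k:ℝ)) + y ∈ F} from hmem)]
      rfl
    · rw [Set.indicator_of_notMem (show (-(2*(l:ℝ))-1) ∉ {y : ℝ | (2*(k:ℝ)+1) + y ∈ F} by
        intro hc; exact hmem (by rw [← hpt]; exact hc)),
        Set.indicator_of_notMem (show (-(2*(l:ℝ))) ∉ {y : ℝ | (2*(k:ℝ)) + y ∈ F} from hmem)]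
  rw [hP1, hN1, hPN, add_zero, zero_add]

lemma s0_null {F : Set ℝ} (hF : MeasurableSet F) (hFS : F ⊆ Sev) :
    ComplexMeasure.re (conv Mu Nu) F = 0 := by
  rw [re_conv, VectorMeasure.sub_apply, Measure.toSignedMeasure_apply_measurable hF,
    Measure.toSignedMeasure_apply_measurable hF, measureReal_def, measureReal_def, AB_eq hF hFS, sub_self]

lemma cvar_conv_Sev : cvar (conv Mu Nu) Sev = 0 := by
  have him : ComplexMeasure.im (conv Mu Nu) = 0 := im_conv
  have hposIm : posIm (conv Mu Nu) = 0 := by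
    rw [posIm, him, SignedMeasure.toJordanDecomposition_zero, JordanDecomposition.zero_posPart]
  have hnegIm : negIm (conv Mu Nu) = 0 := by
    rw [negIm, him, SignedMeasure.toJordanDecomposition_zero, JordanDecomposition.zero_negPart]
  obtain ⟨i, hi₁, hi₂, hi₃, hpos, hneg⟩ :=
    (ComplexMeasure.re (conv Mu Nu)).toJordanDecomposition_spec
  have hposRe : posRe (conv Mu Nu) Sev = 0 := by
    rw [posRe, hpos, SignedMeasure.toMeasureOfZeroLE_apply _ hi₂ hi₁ Sev_meas]
    have h0 : ComplexMeasure.re (conv Mu Nu) (i ∩ Sev) = 0 :=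
      s0_null (hi₁.inter Sev_meas) Set.inter_subset_right
    have h0' : ((conv Mu Nu) (i ∩ Sev)).re = 0 := h0
    rw [ENNReal.coe_eq_zero]
    ext
    simp [h0']; exact h0
  have hnegRe : negRe (conv Mu Nu) Sev = 0 := by
    rw [negRe, hneg, SignedMeasure.toMeasureOfLEZero_apply _ hi₃ hi₁.compl Sev_meas]
    have h0 : ComplexMeasure.re (conv Mu Nu) (iᶜ ∩ Sev) = 0 :=
      s0_null (hi₁.compl.inter Sev_meas) Set.inter_subset_right
    have h0' : ((conv Mu Nu) (iᶜ ∩ Sev)).re = 0 := h0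
    rw [ENNReal.coe_eq_zero]
    ext
    simp [h0']; exact h0
  rw [cvar, Measure.add_apply, Measure.add_apply, Measure.add_apply, hposRe, hnegRe,
    hposIm, hnegIm]
  simp

open Classical in
def ff : ℝ → ℂ := fun x => if x ∈ Sev then (2:ℂ)^((⌊x/2⌋).natAbs) else 0

lemma ff_meas : Measurable ff := by
  apply Measurable.ite Sev_meas
  · exact (measurable_from_top (f := fun n : ℤ => (2:ℂ)^(n.natAbs))).comp
      ((measurable_id.div_const 2).floor)
  · exact measurable_const

lemma ff_support : ∀ x, ff x ≠ 0 → x ∈ Sev := by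
  intro x hx
  by_contra h
  rw [ff] at hx
  simp [h] at hx

lemma ff_even (m : ℕ) : ff (2*(m:ℝ)) = (2:ℂ)^m := by
  have hmem : (2*(m:ℝ)) ∈ Sev := ⟨(m:ℤ), by push_cast; ring⟩
  rw [ff]
  rw [if_pos hmem]
  have h1 : (2*(m:ℝ))/2 = (m:ℝ) := by ring
  rw [h1]
  rw [Int.floor_natCast]
  simp

lemma ff_integrable : Integrable ff (cvar (conv Mu Nu)) := by
  have hz : ∀ᵐ x ∂(cvar (conv Mu Nu)), ff x = 0 := by
    rw [ae_iff]
    apply measure_mono_null _ cvar_conv_Sev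
    intro x hx
    exact ff_support x hx
  exact (integrable_zero _ _ _).congr (by filter_upwards [hz] with x hx using hx.symm)

def pt : ℕ → ℝ × ℝ := fun m => (2*(m:ℝ), (0:ℝ))

lemma pt_inj : Function.Injective pt := by
  intro m n h
  have : 2*(m:ℝ) = 2*(n:ℝ) := congrArg Prod.fst h
  exact_mod_cast (by linarith : (m:ℝ) = n)

lemma re_cprod_pt (m : ℕ) : ComplexMeasure.re (cprod Mu Nu) {pt m} = ((2:ℝ)⁻¹)^m := by
  have hpt : ({pt m} : Set (ℝ × ℝ)) = {2*(m:ℝ)} ×ˢ {(0:ℝ)} := by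
    rw [Set.singleton_prod_singleton]; rfl
  have hms : MeasurableSet ({pt m} : Set (ℝ × ℝ)) := measurableSet_singleton _
  rw [re_cprod, VectorMeasure.sub_apply, Measure.toSignedMeasure_apply_measurable hms,
    Measure.toSignedMeasure_apply_measurable hms, hpt, measureReal_def, measureReal_def]
  rw [PP, NN, Measure.prod_prod, Measure.prod_prod, muP_even, nuP_zero, nuN_zero]
  rw [mul_one, mul_zero]
  simp only [ENNReal.toReal_zero, sub_zero, aw]
  rw [ENNReal.toReal_pow, ENNReal.toReal_inv]
  norm_num

lemma tvar_pt (m : ℕ) : ((2:ℝ≥0∞)⁻¹)^m ≤ tvar (cprod Mu Nu) {pt m} := by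
  have h := ofReal_abs_re_le_tvar (cprod Mu Nu) (measurableSet_singleton (pt m))
  rw [re_cprod_pt] at h
  refine le_trans (le_of_eq ?_) h
  rw [abs_of_nonneg (by positivity)]
  rw [ENNReal.ofReal_pow (by norm_num)]
  congr 1
  rw [show ((2:ℝ)⁻¹) = (((2:ℝ≥0∞)⁻¹).toReal) by norm_num,
    ENNReal.ofReal_toReal (by norm_num)]

lemma ff_not_integrable :
    ¬ Integrable (fun p : ℝ × ℝ => ff (p.1 + p.2)) (tvar (cprod Mu Nu)) := by
  intro h
  have hfin := h.2
  rw [hasFiniteIntegral_def] at hfin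
  set tv := tvar (cprod Mu Nu)
  set g : ℝ × ℝ → ℂ := fun p => ff (p.1 + p.2) with hg
  have hterm : ∀ m : ℕ, (1:ℝ≥0∞) ≤ ∫⁻ p in {pt m}, (‖g p‖₊ : ℝ≥0∞) ∂tv := by
    intro m
    rw [lintegral_singleton]
    have hgv : g (pt m) = (2:ℂ)^m := by
      rw [hg]
      show ff (2*(m:ℝ) + 0) = _
      rw [add_zero, ff_even]
    have h1 : (‖g (pt m)‖₊ : ℝ≥0∞) = (2:ℝ≥0∞)^m := by
      rw [hgv]
      push_cast [nnnorm_pow]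
      norm_num
    rw [h1]
    calc (1:ℝ≥0∞) = (2:ℝ≥0∞)^m * ((2:ℝ≥0∞)⁻¹)^m := by
          rw [← mul_pow, ENNReal.mul_inv_cancel (by norm_num) (by norm_num), one_pow]
      _ ≤ (2:ℝ≥0∞)^m * tv {pt m} := by
          exact mul_le_mul_right (tvar_pt m) _
  have htop : (⊤:ℝ≥0∞) ≤ ∫⁻ p, (‖g p‖₊ : ℝ≥0∞) ∂tv := by
    calc (⊤:ℝ≥0∞) = ∑' _ : ℕ, (1:ℝ≥0∞) := (ENNReal.tsum_const_eq_top_of_ne_zero one_ne_zero).symm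
      _ ≤ ∑' m : ℕ, ∫⁻ p in {pt m}, (‖g p‖₊ : ℝ≥0∞) ∂tv := ENNReal.tsum_le_tsum hterm
      _ = ∫⁻ p in ⋃ m : ℕ, {pt m}, (‖g p‖₊ : ℝ≥0∞) ∂tv := by
          rw [lintegral_iUnion (fun m => measurableSet_singleton _)
            (fun m n hmn => Set.disjoint_singleton.mpr (fun hc => hmn (pt_inj hc)))]
      _ ≤ ∫⁻ p, (‖g p‖₊ : ℝ≥0∞) ∂tv := by
          exact lintegral_mono' Measure.restrict_le_self le_rfl
  exact (lt_irrefl _ (lt_of_le_of_lt htop hfin)).elim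

/-- the converse of the change-of-variables implication fails for
nonpositive measures: there are complex measures `μ, ν` and a Borel `f` integrable
w.r.t. the convolution `μ*ν`, while `(x,y) ↦ f (x+y)` is not `|μ×ν|`-integrable. -/
theorem exists_conv_integrable_not_prod_integrable :
    ∃ (μ ν : ComplexMeasure ℝ) (f : ℝ → ℂ), Measurable f ∧
      CIntegrable f (conv μ ν) ∧
      ¬ Integrable (fun p : ℝ × ℝ => f (p.1 + p.2)) (tvar (cprod μ ν)) :=
  ⟨Mu, Nu, ff, ff_meas, ff_integrable, ff_not_integrable⟩

end Paper
end
end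

section
/- Let E : B(ℝ) → L(H) be a semispectral measure, μ a Borel probability measure on ℝ, and k ∈ ℕ. A vector φ ∈ H satisfies ∫ x^{2k} d(μ*E)_{φ,φ}(x) < ∞ if and only if both μ[2k] = ∫ x^{2k} dμ(x) < ∞ and ∫ x^{2k} dE_{φ,φ}(x) < ∞ (or φ = 0). Consequently, the square-integrability domain D̃(x^k, μ*E) equals D̃(x^k, E) if μ[2k] exists, and equals {0} otherwise. -/
open MeasureTheory

noncomputable section
namespace Paper

local notation "⟪" x ", " y "⟫" => @inner ℂ _ _ x y

/-- A semispectral measure (normalized positive operator measure): each measurable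
set is assigned a positive bounded operator, the whole space is assigned the
identity, and the assignment is weakly countably additive. -/
structure Semispectral (Ω : Type*) [MeasurableSpace Ω] (H : Type*)
    [NormedAddCommGroup H] [InnerProductSpace ℂ H] [CompleteSpace H] where
  toFun : Set Ω → H →L[ℂ] H
  pos : ∀ X : Set Ω, MeasurableSet X → (toFun X).IsPositive
  norm_univ : toFun Set.univ = 1
  weakly_additive : ∀ f : ℕ → Set Ω, (∀ n, MeasurableSet (f n)) →
    Pairwise (Function.onFun Disjoint f) → ∀ φ ψ : H,
      HasSum (fun n => ⟪ψ, toFun (f n) φ⟫) ⟪ψ, toFun (⋃ n, f n) φ⟫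

/-- A semispectral measure is spectral (projection valued) if each operator is
idempotent. -/
def Semispectral.IsSpectral {Ω : Type*} [MeasurableSpace Ω] {H : Type*}
    [NormedAddCommGroup H] [InnerProductSpace ℂ H] [CompleteSpace H]
    (E : Semispectral Ω H) : Prop :=
  ∀ X : Set Ω, MeasurableSet X → (E.toFun X).comp (E.toFun X) = E.toFun X

variable {H : Type*} [NormedAddCommGroup H] [InnerProductSpace ℂ H] [CompleteSpace H]

lemma aux_core (k : ℕ) (a b : ℝ) :
    ENNReal.ofReal ((a + b) ^ (2 * k)) ≤
      2 ^ (2 * k) * (ENNReal.ofReal (a ^ (2 * k)) + ENNReal.ofReal (b ^ (2 * k))) := by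
  have hnn : ∀ x : ℝ, 0 ≤ x ^ (2 * k) := fun x => by
    rw [mul_comm, pow_mul]; positivity
  have hreal : (a + b) ^ (2 * k) ≤ 2 ^ (2 * k) * (a ^ (2 * k) + b ^ (2 * k)) := by
    have he : Even (2 * k) := even_two_mul k
    have h1 : (a + b) ^ (2 * k) = |a + b| ^ (2 * k) := (he.pow_abs _).symm
    have h2 : |a + b| ^ (2 * k) ≤ (|a| + |b|) ^ (2 * k) :=
      pow_le_pow_left₀ (abs_nonneg _) (abs_add_le a b) _
    have h3 : (|a| + |b|) ^ (2 * k) ≤ (2 * max |a| |b|) ^ (2 * k) := by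
      apply pow_le_pow_left₀ (by positivity)
      rw [two_mul]
      exact add_le_add (le_max_left _ _) (le_max_right _ _)
    have h4 : (2 * max |a| |b|) ^ (2 * k) = 2 ^ (2 * k) * (max |a| |b|) ^ (2 * k) :=
      mul_pow _ _ _
    have h5 : (max |a| |b|) ^ (2 * k) ≤ a ^ (2 * k) + b ^ (2 * k) := by
      rcases max_cases |a| |b| with ⟨h, _⟩ | ⟨h, _⟩ <;> rw [h]
      · rw [he.pow_abs]; nlinarith [hnn b]
      · rw [he.pow_abs]; nlinarith [hnn a]
    calc (a + b) ^ (2 * k) = |a + b| ^ (2 * k) := h1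
      _ ≤ (|a| + |b|) ^ (2 * k) := h2
      _ ≤ (2 * max |a| |b|) ^ (2 * k) := h3
      _ = 2 ^ (2 * k) * (max |a| |b|) ^ (2 * k) := h4
      _ ≤ 2 ^ (2 * k) * (a ^ (2 * k) + b ^ (2 * k)) := by
          apply mul_le_mul_of_nonneg_left h5 (by positivity)
  calc ENNReal.ofReal ((a + b) ^ (2 * k))
      ≤ ENNReal.ofReal (2 ^ (2 * k) * (a ^ (2 * k) + b ^ (2 * k))) :=
        ENNReal.ofReal_le_ofReal hreal
    _ = 2 ^ (2 * k) * (ENNReal.ofReal (a ^ (2 * k)) + ENNReal.ofReal (b ^ (2 * k))) := by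
        rw [ENNReal.ofReal_mul (by positivity), ENNReal.ofReal_add (hnn a) (hnn b),
          ENNReal.ofReal_pow (by norm_num), ENNReal.ofReal_ofNat]

lemma aux_bound_int (ν : Measure ℝ) [IsFiniteMeasure ν] (k : ℕ) (a : ℝ) (f g : ℝ → ℝ)
    (hfg : ∀ x, g x = a + f x)
    (h : ∫⁻ x, ENNReal.ofReal (f x ^ (2 * k)) ∂ν < ⊤) :
    ∫⁻ x, ENNReal.ofReal (g x ^ (2 * k)) ∂ν < ⊤ := by
  have h2top : (2 : ENNReal) ^ (2 * k) ≠ ⊤ := ENNReal.pow_ne_top ENNReal.ofNat_ne_top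
  calc ∫⁻ x, ENNReal.ofReal (g x ^ (2 * k)) ∂ν
      ≤ ∫⁻ x, 2 ^ (2 * k) *
          (ENNReal.ofReal (a ^ (2 * k)) + ENNReal.ofReal (f x ^ (2 * k))) ∂ν := by
        refine lintegral_mono fun x => ?_
        rw [hfg x]; exact aux_core k a (f x)
    _ = 2 ^ (2 * k) *
          (ENNReal.ofReal (a ^ (2 * k)) * ν Set.univ +
            ∫⁻ x, ENNReal.ofReal (f x ^ (2 * k)) ∂ν) := by
        rw [lintegral_const_mul' _ _ h2top, lintegral_add_left measurable_const,
          lintegral_const]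
    _ < ⊤ := by
        refine ENNReal.mul_lt_top h2top.lt_top ?_
        exact ENNReal.add_lt_top.mpr
          ⟨ENNReal.mul_lt_top ENNReal.ofReal_lt_top (measure_lt_top _ _), h⟩

/-- square-integrability domain of the convolved semispectral measure.
`∫ x^{2k} d(μ*E)_{φ,φ} < ∞` iff both `μ[2k] < ∞` and `∫ x^{2k} dE_{φ,φ} < ∞`, or `φ = 0`.
Here `mE φ` and `mF φ` are the positive measures `E_{φ,φ}` and `(μ*E)_{φ,φ}`. -/
theorem sq_domain_conv (E F : Semispectral ℝ H) (μ : Measure ℝ) [IsProbabilityMeasure μ]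
    (hF : ∀ X : Set ℝ, MeasurableSet X → ∀ φ ψ : H,
      ⟪ψ, F.toFun X φ⟫ = ∫ y, ⟪ψ, E.toFun {x : ℝ | x + y ∈ X} φ⟫ ∂μ)
    (mE mF : H → Measure ℝ)
    (hmE : ∀ (φ : H) (X : Set ℝ), MeasurableSet X →
      mE φ X = ENNReal.ofReal (⟪φ, E.toFun X φ⟫.re))
    (hmF : ∀ (φ : H) (X : Set ℝ), MeasurableSet X →
      mF φ X = ENNReal.ofReal (⟪φ, F.toFun X φ⟫.re))
    (k : ℕ) (φ : H) :
    (∫⁻ x, ENNReal.ofReal (x ^ (2 * k)) ∂(mF φ)) < ⊤ ↔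
      (((∫⁻ x, ENNReal.ofReal (x ^ (2 * k)) ∂μ) < ⊤ ∧
        (∫⁻ x, ENNReal.ofReal (x ^ (2 * k)) ∂(mE φ)) < ⊤) ∨ φ = 0) := by
  classical
  haveI hEfin : IsFiniteMeasure (mE φ) :=
    ⟨by rw [hmE φ _ MeasurableSet.univ]; exact ENNReal.ofReal_lt_top⟩
  -- inner products with a positive operator are real and nonneg
  have hreal : ∀ S : Set ℝ, MeasurableSet S →
      ⟪φ, E.toFun S φ⟫ = (((mE φ S).toReal : ℝ) : ℂ) := by
    intro S hS
    have hpos := E.pos S hS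
    have hsym : ⟪E.toFun S φ, φ⟫ = ⟪φ, E.toFun S φ⟫ :=
      (ContinuousLinearMap.isSelfAdjoint_iff_isSymmetric.mp hpos.isSelfAdjoint) φ φ
    have him : (⟪φ, E.toFun S φ⟫).im = 0 := by
      have hconj : (starRingEnd ℂ) ⟪φ, E.toFun S φ⟫ = ⟪φ, E.toFun S φ⟫ := by
        rw [inner_conj_symm]; exact hsym
      exact Complex.conj_eq_iff_im.mp hconj
    have hre : 0 ≤ (⟪φ, E.toFun S φ⟫).re := by
      have := hpos.inner_nonneg_right φ
      exact (Complex.nonneg_iff.mp this).1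
    rw [hmE φ S hS, ENNReal.toReal_ofReal hre]
    exact Complex.ext (by simp) (by simp [him])
  -- the convolved measure mF φ is the pushforward of the product
  have hmadd : Measurable fun p : ℝ × ℝ => p.2 + p.1 := measurable_snd.add measurable_fst
  have hν : mF φ = (μ.prod (mE φ)).map fun p : ℝ × ℝ => p.2 + p.1 := by
    refine Measure.ext fun X hX => ?_
    have hs : MeasurableSet ((fun p : ℝ × ℝ => p.2 + p.1) ⁻¹' X) := hmadd hX
    rw [Measure.map_apply hmadd hX, Measure.prod_apply hs]
    have hXy : ∀ y : ℝ, MeasurableSet {x : ℝ | x + y ∈ X} := fun y =>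
      (measurable_id.add_const y) hX
    rw [hmF φ X hX, hF X hX φ φ]
    have h1 : ∀ y : ℝ, ⟪φ, E.toFun {x | x + y ∈ X} φ⟫ =
        (((mE φ {x | x + y ∈ X}).toReal : ℝ) : ℂ) := fun y => hreal _ (hXy y)
    simp_rw [h1]
    have hcast : ∫ y, (((mE φ {x | x + y ∈ X}).toReal : ℝ) : ℂ) ∂μ =
        ((∫ y, (mE φ {x | x + y ∈ X}).toReal ∂μ : ℝ) : ℂ) := integral_ofReal
    rw [hcast, Complex.ofReal_re]
    have hmeas : Measurable fun y => mE φ {x | x + y ∈ X} :=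
      measurable_measure_prodMk_left (ν := mE φ) hs
    rw [integral_toReal hmeas.aemeasurable (.of_forall fun y => measure_lt_top _ _)]
    rw [ENNReal.ofReal_toReal]
    · rfl
    · have hle : ∫⁻ y, mE φ {x | x + y ∈ X} ∂μ ≤ ∫⁻ _, mE φ Set.univ ∂μ :=
        lintegral_mono fun y => measure_mono (Set.subset_univ _)
      refine (hle.trans_lt ?_).ne
      rw [lintegral_const]
      exact ENNReal.mul_lt_top (measure_lt_top _ _) (measure_lt_top _ _)
  have mx : Measurable fun x : ℝ => ENNReal.ofReal (x ^ (2 * k)) :=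
    ENNReal.measurable_ofReal.comp (measurable_id.pow_const _)
  have hfmeas : Measurable fun p : ℝ × ℝ => ENNReal.ofReal ((p.2 + p.1) ^ (2 * k)) :=
    mx.comp hmadd
  have hLHS : (∫⁻ x, ENNReal.ofReal (x ^ (2 * k)) ∂(mF φ)) =
      ∫⁻ y, ∫⁻ x, ENNReal.ofReal ((x + y) ^ (2 * k)) ∂(mE φ) ∂μ := by
    rw [hν, lintegral_map mx hmadd, lintegral_prod _ hfmeas.aemeasurable]
  rw [hLHS]
  by_cases hφ : φ = 0
  · have hE0 : mE φ = 0 := by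
      refine Measure.ext fun S hS => ?_
      rw [hmE φ S hS, hφ]
      simp
    rw [hE0]
    simp [hφ]
  · simp only [hφ, or_false]
    constructor
    · intro h
      have hinner_meas : Measurable fun y => ∫⁻ x, ENNReal.ofReal ((x + y) ^ (2 * k)) ∂(mE φ) :=
        Measurable.lintegral_prod_right (f := fun y x => ENNReal.ofReal ((x + y) ^ (2 * k)))
          hfmeas
      have hae : ∀ᵐ y ∂μ, (∫⁻ x, ENNReal.ofReal ((x + y) ^ (2 * k)) ∂(mE φ)) < ⊤ :=
        ae_lt_top hinner_meas h.ne
      haveI : (ae μ).NeBot := ae_neBot.mpr (IsProbabilityMeasure.ne_zero μ)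
      obtain ⟨y₀, hy₀⟩ := hae.exists
      have hB : (∫⁻ x, ENNReal.ofReal (x ^ (2 * k)) ∂(mE φ)) < ⊤ := by
        have := aux_bound_int (mE φ) k (-y₀) (fun x => x + y₀) (fun x => x)
          (fun x => by ring) hy₀
        simpa using this
      have hswap : (∫⁻ y, ∫⁻ x, ENNReal.ofReal ((x + y) ^ (2 * k)) ∂(mE φ) ∂μ) =
          ∫⁻ x, ∫⁻ y, ENNReal.ofReal ((x + y) ^ (2 * k)) ∂μ ∂(mE φ) := by
        exact lintegral_lintegral_swap
          (f := fun y x => ENNReal.ofReal ((x + y) ^ (2 * k))) hfmeas.aemeasurable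
      rw [hswap] at h
      have hinner_meas2 : Measurable fun x => ∫⁻ y, ENNReal.ofReal ((x + y) ^ (2 * k)) ∂μ :=
        Measurable.lintegral_prod_right (f := fun x y => ENNReal.ofReal ((x + y) ^ (2 * k)))
          (mx.comp (measurable_fst.add measurable_snd))
      have haeE : ∀ᵐ x ∂(mE φ), (∫⁻ y, ENNReal.ofReal ((x + y) ^ (2 * k)) ∂μ) < ⊤ :=
        ae_lt_top hinner_meas2 h.ne
      have hEne : mE φ ≠ 0 := by
        intro h0
        have h1 : mE φ Set.univ = 0 := by rw [h0]; rfl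
        rw [hmE φ _ MeasurableSet.univ] at h1
        have h2 : (0 : ℝ) < (⟪φ, φ⟫ : ℂ).re := by
          have h3 := @inner_self_eq_norm_sq ℂ H _ _ _ φ
          have h4 : (0:ℝ) < ‖φ‖ ^ 2 := pow_pos (norm_pos_iff.mpr hφ) 2
          rw [← h3] at h4
          simpa using h4
        simp only [ENNReal.ofReal_eq_zero] at h1
        have h5 : ⟪φ, E.toFun Set.univ φ⟫ = ⟪φ, φ⟫ := by
          rw [E.norm_univ]; rfl
        rw [h5] at h1
        linarith
      haveI : (ae (mE φ)).NeBot := ae_neBot.mpr hEne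
      obtain ⟨x₀, hx₀⟩ := haeE.exists
      have hA : (∫⁻ x, ENNReal.ofReal (x ^ (2 * k)) ∂μ) < ⊤ := by
        have := aux_bound_int μ k (-x₀) (fun y => x₀ + y) (fun y => y)
          (fun y => by ring) hx₀
        simpa using this
      exact ⟨hA, hB⟩
    · rintro ⟨hA, hB⟩
      have h2top : (2 : ENNReal) ^ (2 * k) ≠ ⊤ := ENNReal.pow_ne_top ENNReal.ofNat_ne_top
      calc (∫⁻ y, ∫⁻ x, ENNReal.ofReal ((x + y) ^ (2 * k)) ∂(mE φ) ∂μ)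
          ≤ ∫⁻ y, ∫⁻ x, 2 ^ (2 * k) *
              (ENNReal.ofReal (x ^ (2 * k)) + ENNReal.ofReal (y ^ (2 * k))) ∂(mE φ) ∂μ :=
            lintegral_mono fun y => lintegral_mono fun x => aux_core k x y
        _ = ∫⁻ y, 2 ^ (2 * k) *
              ((∫⁻ x, ENNReal.ofReal (x ^ (2 * k)) ∂(mE φ)) +
                ENNReal.ofReal (y ^ (2 * k)) * mE φ Set.univ) ∂μ := by
            refine lintegral_congr fun y => ?_
            rw [lintegral_const_mul' _ _ h2top, lintegral_add_left mx, lintegral_const]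
        _ = 2 ^ (2 * k) *
              ((∫⁻ x, ENNReal.ofReal (x ^ (2 * k)) ∂(mE φ)) * μ Set.univ +
                (∫⁻ y, ENNReal.ofReal (y ^ (2 * k)) ∂μ) * mE φ Set.univ) := by
            rw [lintegral_const_mul' _ _ h2top, lintegral_add_left measurable_const,
              lintegral_const, lintegral_mul_const' _ _ (measure_ne_top _ _)]
        _ < ⊤ := by
            refine ENNReal.mul_lt_top h2top.lt_top (ENNReal.add_lt_top.mpr ⟨?_, ?_⟩)
            · exact ENNReal.mul_lt_top hB (measure_lt_top _ _)
            · exact ENNReal.mul_lt_top hA (measure_lt_top _ _)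

end Paper
end
end

section
/- Let A and B be selfadjoint operators on a complex Hilbert space H, T a positive trace-one operator, and k ∈ ℕ such that √|A|^k √T is Hilbert–Schmidt (equivalently, the k-th moment p_T^A[k] of the probability measure p_T^A(X)=Tr[T E^A(X)] exists). Then for the convolved semispectral measure p_T^A * E^B one has L(x^k, p_T^A * E^B) = ∑_{n=0}^k C(k,n) p_T^A[k−n] B^n with domain D(B^k). -/
open MeasureTheory

noncomputable section
namespace Paper

local notation "⟪" x ", " y "⟫" => @inner ℂ _ _ x y

variable {α : Type*} [MeasurableSpace α]

variable {H : Type*} [NormedAddCommGroup H] [InnerProductSpace ℂ H] [CompleteSpace H]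



open ENNReal

/-- k-th absolute moment weight. -/
def mk (k : ℕ) (x : ℝ) : ℝ≥0∞ := ENNReal.ofReal (|x| ^ k)

@[measurability, fun_prop]
lemma measurable_mk (k : ℕ) : Measurable (mk k) := by
  unfold mk
  exact ((continuous_abs.pow k).measurable).ennreal_ofReal

lemma real_pow_add_le (k : ℕ) {a b : ℝ} (ha : 0 ≤ a) (hb : 0 ≤ b) :
    (a + b) ^ k ≤ 2 ^ k * (a ^ k + b ^ k) := by
  rcases le_total a b with h | h
  · calc (a + b) ^ k ≤ (2 * b) ^ k := by
          apply pow_le_pow_left₀ (by linarith) (by linarith)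
        _ = 2 ^ k * b ^ k := by rw [mul_pow]
        _ ≤ 2 ^ k * (a ^ k + b ^ k) := by
          have := pow_nonneg ha k
          have h2 : (0:ℝ) ≤ 2 ^ k := by positivity
          nlinarith
  · calc (a + b) ^ k ≤ (2 * a) ^ k := by
          apply pow_le_pow_left₀ (by linarith) (by linarith)
        _ = 2 ^ k * a ^ k := by rw [mul_pow]
        _ ≤ 2 ^ k * (a ^ k + b ^ k) := by
          have := pow_nonneg hb k
          have h2 : (0:ℝ) ≤ 2 ^ k := by positivity
          nlinarith

lemma mk_le (k : ℕ) {u v w : ℝ} (h : |u| ≤ |v| + |w|) :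
    mk k u ≤ 2 ^ k * (mk k v + mk k w) := by
  unfold mk
  have h1 : |u| ^ k ≤ 2 ^ k * (|v| ^ k + |w| ^ k) :=
    le_trans (pow_le_pow_left₀ (abs_nonneg u) h k)
      (real_pow_add_le k (abs_nonneg v) (abs_nonneg w))
  calc ENNReal.ofReal (|u| ^ k) ≤ ENNReal.ofReal (2 ^ k * (|v| ^ k + |w| ^ k)) :=
        ENNReal.ofReal_le_ofReal h1
    _ = 2 ^ k * (ENNReal.ofReal (|v| ^ k) + ENNReal.ofReal (|w| ^ k)) := by
        rw [ENNReal.ofReal_mul (by positivity),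
          ENNReal.ofReal_add (by positivity) (by positivity)]
        congr 1
        rw [ENNReal.ofReal_pow (by norm_num)]
        norm_num

/-- Convolution of measures on ℝ: first variable from `p`, second from `ν`. -/
def pconv (p ν : Measure ℝ) : Measure ℝ :=
  Measure.map (fun z : ℝ × ℝ => z.2 + z.1) (p.prod ν)

lemma pconv_apply (p ν : Measure ℝ) [SFinite p] [SFinite ν] {X : Set ℝ}
    (hX : MeasurableSet X) :
    pconv p ν X = ∫⁻ y, ν {x | x + y ∈ X} ∂p := by
  rw [pconv, Measure.map_apply (by fun_prop) hX,
    Measure.prod_apply (hX.preimage (by fun_prop))]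
  rfl

lemma lintegral_pconv (p ν : Measure ℝ) [SFinite p] [SFinite ν] {f : ℝ → ℝ≥0∞}
    (hf : Measurable f) :
    ∫⁻ x, f x ∂(pconv p ν) = ∫⁻ y, ∫⁻ x, f (x + y) ∂ν ∂p := by
  rw [pconv, lintegral_map hf (by fun_prop), lintegral_prod _ (by fun_prop)]

instance pconv_finite (p ν : Measure ℝ) [IsFiniteMeasure p] [IsFiniteMeasure ν] :
    IsFiniteMeasure (pconv p ν) := by
  unfold pconv
  infer_instance

lemma pconv_add (p μ ν : Measure ℝ) [SFinite p] [SFinite μ] [SFinite ν] :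
    pconv p (μ + ν) = pconv p μ + pconv p ν := by
  unfold pconv
  rw [Measure.prod_add, Measure.map_add _ _ (by fun_prop : Measurable fun z : ℝ × ℝ => z.2 + z.1)]

lemma pconv_zero (p : Measure ℝ) : pconv p 0 = 0 := by
  unfold pconv
  rw [Measure.prod_zero, Measure.map_zero]

lemma moment_pconv_finite (p ν : Measure ℝ) [IsFiniteMeasure p] [IsFiniteMeasure ν] (k : ℕ)
    (hν : ∫⁻ x, mk k x ∂ν < ⊤) (hp : ∫⁻ y, mk k y ∂p < ⊤) :
    ∫⁻ x, mk k x ∂(pconv p ν) < ⊤ := by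
  rw [lintegral_pconv p ν (measurable_mk k)]
  have hb : ∀ y, ∫⁻ x, mk k (x + y) ∂ν ≤ 2 ^ k * (∫⁻ x, mk k x ∂ν + ν Set.univ * mk k y) := by
    intro y
    calc ∫⁻ x, mk k (x + y) ∂ν ≤ ∫⁻ x, 2 ^ k * (mk k x + mk k y) ∂ν := by
          apply lintegral_mono
          intro x
          exact mk_le k (abs_add_le x y)
      _ = 2 ^ k * (∫⁻ x, mk k x ∂ν + ν Set.univ * mk k y) := by
          rw [lintegral_const_mul _ (by fun_prop : Measurable fun x => mk k x + mk k y)]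
          congr 1
          rw [lintegral_add_right _ measurable_const, lintegral_const]
          ring
  calc ∫⁻ y, ∫⁻ x, mk k (x + y) ∂ν ∂p
      ≤ ∫⁻ y, 2 ^ k * (∫⁻ x, mk k x ∂ν + ν Set.univ * mk k y) ∂p := lintegral_mono hb
    _ = 2 ^ k * ((∫⁻ x, mk k x ∂ν) * p Set.univ + ν Set.univ * ∫⁻ y, mk k y ∂p) := by
        rw [lintegral_const_mul _ (by
          exact (measurable_const.add ((measurable_mk k).const_mul _)))]
        congr 1
        rw [lintegral_add_left measurable_const, lintegral_const,
          lintegral_const_mul _ (measurable_mk k)]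
    _ < ⊤ := by
        apply ENNReal.mul_lt_top (ENNReal.pow_lt_top (by norm_num))
        apply ENNReal.add_lt_top.2
        constructor
        · exact ENNReal.mul_lt_top hν (measure_lt_top _ _)
        · exact ENNReal.mul_lt_top (measure_lt_top _ _) hp

lemma moment_deconv_finite (p ν : Measure ℝ) [IsProbabilityMeasure p] [IsFiniteMeasure ν] (k : ℕ)
    (hc : ∫⁻ x, mk k x ∂(pconv p ν) < ⊤) (hp : ∫⁻ y, mk k y ∂p < ⊤) :
    ∫⁻ x, mk k x ∂ν < ⊤ := by
  have key : ∫⁻ x, mk k x ∂ν ≤ 2 ^ k * (∫⁻ x, mk k x ∂(pconv p ν) + ν Set.univ * ∫⁻ y, mk k y ∂p) := by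
    have h0 : ∫⁻ x, mk k x ∂ν = ∫⁻ y, ∫⁻ x, mk k x ∂ν ∂p := by
      rw [lintegral_const]
      simp
    rw [h0, lintegral_pconv p ν (measurable_mk k)]
    calc ∫⁻ y, ∫⁻ x, mk k x ∂ν ∂p
        ≤ ∫⁻ y, ∫⁻ x, 2 ^ k * (mk k (x + y) + mk k y) ∂ν ∂p := by
          apply lintegral_mono; intro y
          apply lintegral_mono; intro x
          apply mk_le k
          have : x = x + y + -y := by ring
          calc |x| = |x + y + -y| := by rw [← this]
            _ ≤ |x + y| + |-y| := abs_add_le _ _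
            _ = |x + y| + |y| := by rw [abs_neg]
      _ = ∫⁻ y, 2 ^ k * ((∫⁻ x, mk k (x + y) ∂ν) + ν Set.univ * mk k y) ∂p := by
          apply lintegral_congr; intro y
          rw [lintegral_const_mul _ (by fun_prop : Measurable fun x => mk k (x + y) + mk k y)]
          congr 1
          rw [lintegral_add_right _ measurable_const, lintegral_const]
          ring
      _ = 2 ^ k * ((∫⁻ y, ∫⁻ x, mk k (x + y) ∂ν ∂p) + ν Set.univ * ∫⁻ y, mk k y ∂p) := by
          rw [lintegral_const_mul _ (by
            apply Measurable.add
            · apply Measurable.lintegral_prod_right (f := fun y x => mk k (x + y))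
              fun_prop
            · exact (measurable_mk k).const_mul _)]
          congr 1
          rw [lintegral_add_left, lintegral_const_mul _ (measurable_mk k)]
          apply Measurable.lintegral_prod_right (f := fun y x => mk k (x + y))
          fun_prop
  calc ∫⁻ x, mk k x ∂ν ≤ _ := key
    _ < ⊤ := by
      apply ENNReal.mul_lt_top (ENNReal.pow_lt_top (by norm_num))
      exact ENNReal.add_lt_top.2 ⟨hc, ENNReal.mul_lt_top (measure_lt_top _ _) hp⟩


instance (c : ComplexMeasure α) : IsFiniteMeasure (posRe c) := by unfold posRe; infer_instance
instance (c : ComplexMeasure α) : IsFiniteMeasure (negRe c) := by unfold negRe; infer_instance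
instance (c : ComplexMeasure α) : IsFiniteMeasure (posIm c) := by unfold posIm; infer_instance
instance (c : ComplexMeasure α) : IsFiniteMeasure (negIm c) := by unfold negIm; infer_instance
instance inst_s14 (c : ComplexMeasure α) : IsFiniteMeasure (cvar c) := by unfold cvar; infer_instance

lemma hahn_char (s : SignedMeasure α) :
    ∃ i : Set α, MeasurableSet i ∧
      (∀ X : Set α, MeasurableSet X →
        s.toJordanDecomposition.posPart X = ENNReal.ofReal (s (i ∩ X)) ∧
        s.toJordanDecomposition.negPart X = ENNReal.ofReal (-s (iᶜ ∩ X))) := by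
  obtain ⟨i, hi₁, hi₂, hi₃, hpos, hneg⟩ := s.toJordanDecomposition_spec
  refine ⟨i, hi₁, fun X hX => ⟨?_, ?_⟩⟩
  · rw [hpos, SignedMeasure.toMeasureOfZeroLE_apply _ hi₂ hi₁ hX]
    rw [ENNReal.ofReal, Real.toNNReal_of_nonneg (VectorMeasure.nonneg_of_zero_le_restrict s
      (VectorMeasure.zero_le_restrict_subset s hi₁ Set.inter_subset_left hi₂))]
  · rw [hneg, SignedMeasure.toMeasureOfLEZero_apply _ hi₃ hi₁.compl hX]
    rw [ENNReal.ofReal, Real.toNNReal_of_nonneg]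

lemma sm_apply (s : SignedMeasure α) {X : Set α} (hX : MeasurableSet X) :
    s X = (s.toJordanDecomposition.posPart X).toReal
      - (s.toJordanDecomposition.negPart X).toReal := by
  conv_lhs => rw [← s.toSignedMeasure_toJordanDecomposition]
  rw [JordanDecomposition.toSignedMeasure, VectorMeasure.sub_apply,
    Measure.toSignedMeasure_apply_measurable hX, Measure.toSignedMeasure_apply_measurable hX]
  rfl

lemma re_apply' (c : ComplexMeasure α) {X : Set α} (hX : MeasurableSet X) :
    (c X).re = (posRe c X).toReal - (negRe c X).toReal := by
  rw [posRe, negRe, ← sm_apply _ hX]; simp; rfl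

lemma im_apply' (c : ComplexMeasure α) {X : Set α} (hX : MeasurableSet X) :
    (c X).im = (posIm c X).toReal - (negIm c X).toReal := by
  rw [posIm, negIm, ← sm_apply _ hX]; simp; rfl

lemma cm_apply (c : ComplexMeasure α) {X : Set α} (hX : MeasurableSet X) :
    c X = (((posRe c X).toReal - (negRe c X).toReal) : ℝ) +
      (((posIm c X).toReal - (negIm c X).toReal) : ℝ) * Complex.I := by
  rw [← re_apply' c hX, ← im_apply' c hX]
  exact (Complex.re_add_im _).symm


lemma nn_pow (k : ℕ) (x : ℝ) : (‖((x:ℂ)) ^ k‖₊ : ℝ≥0∞) = mk k x := by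
  rw [← enorm_eq_nnnorm, ← ofReal_norm_eq_enorm, mk]
  congr 1
  rw [norm_pow, Complex.norm_real, Real.norm_eq_abs]

lemma nn_pow_real (k : ℕ) (x : ℝ) : (‖x ^ k‖₊ : ℝ≥0∞) = mk k x := by
  rw [← enorm_eq_nnnorm, ← ofReal_norm_eq_enorm, mk]
  congr 1
  rw [norm_pow, Real.norm_eq_abs]

lemma hasFin_iff (μ : Measure ℝ) (k : ℕ) :
    HasFiniteIntegral (fun x : ℝ => (x:ℂ) ^ k) μ ↔ ∫⁻ x, mk k x ∂μ < ⊤ := by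
  unfold HasFiniteIntegral
  simp only [enorm_eq_nnnorm]
  constructor <;> intro h <;>
    [rwa [lintegral_congr (fun x => (nn_pow k x))] at h;
     rwa [lintegral_congr (fun x => (nn_pow k x))]]

lemma integrable_pow_iff (μ : Measure ℝ) (k : ℕ) :
    Integrable (fun x : ℝ => (x:ℂ) ^ k) μ ↔ ∫⁻ x, mk k x ∂μ < ⊤ := by
  constructor
  · intro h; exact (hasFin_iff μ k).1 h.2
  · intro h
    exact ⟨(Continuous.aestronglyMeasurable (by continuity)), (hasFin_iff μ k).2 h⟩

lemma integrable_pow_real (μ : Measure ℝ) [IsFiniteMeasure μ] {k n : ℕ} (hn : n ≤ k)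
    (h : ∫⁻ x, mk k x ∂μ < ⊤) : Integrable (fun x : ℝ => x ^ n) μ := by
  refine ⟨Continuous.aestronglyMeasurable (by continuity), ?_⟩
  unfold HasFiniteIntegral
  simp only [enorm_eq_nnnorm]
  rw [lintegral_congr (fun x => (nn_pow_real n x))]
  have hb : ∀ x : ℝ, mk n x ≤ 1 + mk k x := by
    intro x
    unfold mk
    rcases le_total (|x|) 1 with hx | hx
    · calc ENNReal.ofReal (|x| ^ n) ≤ ENNReal.ofReal 1 :=
            ENNReal.ofReal_le_ofReal (pow_le_one₀ (abs_nonneg x) hx)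
        _ = 1 := by simp
        _ ≤ 1 + ENNReal.ofReal (|x| ^ k) := le_self_add
    · calc ENNReal.ofReal (|x| ^ n) ≤ ENNReal.ofReal (|x| ^ k) :=
            ENNReal.ofReal_le_ofReal (pow_le_pow_right₀ hx hn)
        _ ≤ 1 + ENNReal.ofReal (|x| ^ k) := le_add_self
  calc ∫⁻ x, mk n x ∂μ ≤ ∫⁻ x, (1 + mk k x) ∂μ := lintegral_mono hb
    _ = μ Set.univ + ∫⁻ x, mk k x ∂μ := by
        rw [lintegral_add_left measurable_const, lintegral_const, one_mul]
    _ < ⊤ := ENNReal.add_lt_top.2 ⟨measure_lt_top _ _, h⟩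

/-- A complex measure represented by four finite measures. -/
def Rep (d : ComplexMeasure ℝ) (μ₁ μ₂ μ₃ μ₄ : Measure ℝ) : Prop :=
  ∀ X : Set ℝ, MeasurableSet X →
    d X = (((μ₁ X).toReal - (μ₂ X).toReal) : ℝ) +
      (((μ₃ X).toReal - (μ₄ X).toReal) : ℝ) * Complex.I

lemma rep_self (d : ComplexMeasure ℝ) : Rep d (posRe d) (negRe d) (posIm d) (negIm d) :=
  fun X hX => cm_apply d hX

lemma rep_abs_le {d : ComplexMeasure ℝ} {μ₁ μ₂ μ₃ μ₄ : Measure ℝ}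
    [IsFiniteMeasure μ₁] [IsFiniteMeasure μ₂] [IsFiniteMeasure μ₃] [IsFiniteMeasure μ₄]
    (h : Rep d μ₁ μ₂ μ₃ μ₄) {X : Set ℝ} (hX : MeasurableSet X) :
    ENNReal.ofReal (‖d X‖) ≤ (μ₁ + μ₂ + μ₃ + μ₄) X := by
  rw [h X hX]
  have habs : ‖(((μ₁ X).toReal - (μ₂ X).toReal : ℝ) : ℂ) +
      (((μ₃ X).toReal - (μ₄ X).toReal : ℝ) : ℂ) * Complex.I‖ ≤
      ((μ₁ X).toReal + (μ₂ X).toReal) + ((μ₃ X).toReal + (μ₄ X).toReal) := by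
    calc ‖_‖ ≤ ‖(((μ₁ X).toReal - (μ₂ X).toReal : ℝ) : ℂ)‖ +
          ‖(((μ₃ X).toReal - (μ₄ X).toReal : ℝ) : ℂ) * Complex.I‖ :=
        norm_add_le _ _
      _ = |(μ₁ X).toReal - (μ₂ X).toReal| + |(μ₃ X).toReal - (μ₄ X).toReal| := by
          rw [norm_mul, Complex.norm_I, mul_one, Complex.norm_real, Complex.norm_real,
            Real.norm_eq_abs, Real.norm_eq_abs]
      _ ≤ _ := by
          have n1 : (0:ℝ) ≤ (μ₁ X).toReal := ENNReal.toReal_nonneg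
          have n2 : (0:ℝ) ≤ (μ₂ X).toReal := ENNReal.toReal_nonneg
          have n3 : (0:ℝ) ≤ (μ₃ X).toReal := ENNReal.toReal_nonneg
          have n4 : (0:ℝ) ≤ (μ₄ X).toReal := ENNReal.toReal_nonneg
          have h1 : |(μ₁ X).toReal - (μ₂ X).toReal| ≤ (μ₁ X).toReal + (μ₂ X).toReal := by
            rw [abs_sub_le_iff]; constructor <;> linarith
          have h2 : |(μ₃ X).toReal - (μ₄ X).toReal| ≤ (μ₃ X).toReal + (μ₄ X).toReal := by
            rw [abs_sub_le_iff]; constructor <;> linarith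
          linarith
  calc ENNReal.ofReal (‖_‖) ≤ ENNReal.ofReal
        (((μ₁ X).toReal + (μ₂ X).toReal) + ((μ₃ X).toReal + (μ₄ X).toReal)) :=
      ENNReal.ofReal_le_ofReal habs
    _ ≤ (μ₁ X + μ₂ X) + (μ₃ X + μ₄ X) := by
        calc ENNReal.ofReal _ ≤ ENNReal.ofReal ((μ₁ X).toReal + (μ₂ X).toReal)
              + ENNReal.ofReal ((μ₃ X).toReal + (μ₄ X).toReal) := ENNReal.ofReal_add_le
          _ ≤ _ := by
              gcongr <;>
                [exact le_trans ENNReal.ofReal_add_le (by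
                    rw [ENNReal.ofReal_toReal (measure_ne_top _ _),
                      ENNReal.ofReal_toReal (measure_ne_top _ _)]);
                 exact le_trans ENNReal.ofReal_add_le (by
                    rw [ENNReal.ofReal_toReal (measure_ne_top _ _),
                      ENNReal.ofReal_toReal (measure_ne_top _ _)])]
    _ = (μ₁ + μ₂ + μ₃ + μ₄) X := by simp [add_assoc]

lemma cvar_le {d : ComplexMeasure ℝ} {T : Measure ℝ} [IsFiniteMeasure T]
    (hb : ∀ X : Set ℝ, MeasurableSet X → ENNReal.ofReal (‖d X‖) ≤ T X)
    {X : Set ℝ} (hX : MeasurableSet X) : cvar d X ≤ 4 * T X := by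
  obtain ⟨i, hi, hich⟩ := hahn_char (ComplexMeasure.re d)
  obtain ⟨j, hj, hjch⟩ := hahn_char (ComplexMeasure.im d)
  have h1 : posRe d X ≤ T X := by
    rw [posRe, (hich X hX).1]
    calc ENNReal.ofReal ((ComplexMeasure.re d) (i ∩ X))
        ≤ ENNReal.ofReal (‖d (i ∩ X)‖) := by
          apply ENNReal.ofReal_le_ofReal
          simp only [ComplexMeasure.re_apply]
          exact le_trans (le_abs_self _) (Complex.abs_re_le_norm _)
      _ ≤ T (i ∩ X) := hb _ (hi.inter hX)
      _ ≤ T X := measure_mono Set.inter_subset_right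
  have h2 : negRe d X ≤ T X := by
    rw [negRe, (hich X hX).2]
    calc ENNReal.ofReal (-(ComplexMeasure.re d) (iᶜ ∩ X))
        ≤ ENNReal.ofReal (‖d (iᶜ ∩ X)‖) := by
          apply ENNReal.ofReal_le_ofReal
          simp only [ComplexMeasure.re_apply]
          exact le_trans (neg_le_abs _) (Complex.abs_re_le_norm _)
      _ ≤ T (iᶜ ∩ X) := hb _ (hi.compl.inter hX)
      _ ≤ T X := measure_mono Set.inter_subset_right
  have h3 : posIm d X ≤ T X := by
    rw [posIm, (hjch X hX).1]
    calc ENNReal.ofReal ((ComplexMeasure.im d) (j ∩ X))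
        ≤ ENNReal.ofReal (‖d (j ∩ X)‖) := by
          apply ENNReal.ofReal_le_ofReal
          simp only [ComplexMeasure.im_apply]
          exact le_trans (le_abs_self _) (Complex.abs_im_le_norm _)
      _ ≤ T (j ∩ X) := hb _ (hj.inter hX)
      _ ≤ T X := measure_mono Set.inter_subset_right
  have h4 : negIm d X ≤ T X := by
    rw [negIm, (hjch X hX).2]
    calc ENNReal.ofReal (-(ComplexMeasure.im d) (jᶜ ∩ X))
        ≤ ENNReal.ofReal (‖d (jᶜ ∩ X)‖) := by
          apply ENNReal.ofReal_le_ofReal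
          simp only [ComplexMeasure.im_apply]
          exact le_trans (neg_le_abs _) (Complex.abs_im_le_norm _)
      _ ≤ T (jᶜ ∩ X) := hb _ (hj.compl.inter hX)
      _ ≤ T X := measure_mono Set.inter_subset_right
  calc cvar d X = posRe d X + negRe d X + posIm d X + negIm d X := by
        simp [cvar, Measure.add_apply]
    _ ≤ T X + T X + T X + T X := by gcongr
    _ = 4 * T X := by ring

/-- Backward integrability: if `d` is represented by four measures with finite k-th
moments, then `x^k` is `cvar d`-integrable. -/
lemma rep_integrable {d : ComplexMeasure ℝ} {μ₁ μ₂ μ₃ μ₄ : Measure ℝ}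
    [IsFiniteMeasure μ₁] [IsFiniteMeasure μ₂] [IsFiniteMeasure μ₃] [IsFiniteMeasure μ₄]
    (h : Rep d μ₁ μ₂ μ₃ μ₄) (k : ℕ)
    (h1 : ∫⁻ x, mk k x ∂μ₁ < ⊤) (h2 : ∫⁻ x, mk k x ∂μ₂ < ⊤)
    (h3 : ∫⁻ x, mk k x ∂μ₃ < ⊤) (h4 : ∫⁻ x, mk k x ∂μ₄ < ⊤) :
    Integrable (fun x : ℝ => (x:ℂ) ^ k) (cvar d) := by
  rw [integrable_pow_iff]
  have hT : ∫⁻ x, mk k x ∂(μ₁ + μ₂ + μ₃ + μ₄) < ⊤ := by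
    rw [lintegral_add_measure, lintegral_add_measure, lintegral_add_measure]
    exact ENNReal.add_lt_top.2 ⟨ENNReal.add_lt_top.2 ⟨ENNReal.add_lt_top.2 ⟨h1, h2⟩, h3⟩, h4⟩
  have hle : cvar d ≤ (4 : ℝ≥0∞) • (μ₁ + μ₂ + μ₃ + μ₄) := by
    rw [Measure.le_iff]
    intro X hX
    rw [Measure.smul_apply, smul_eq_mul]
    exact cvar_le (fun X hX => rep_abs_le h hX) hX
  calc ∫⁻ x, mk k x ∂(cvar d) ≤ ∫⁻ x, mk k x ∂((4:ℝ≥0∞) • (μ₁ + μ₂ + μ₃ + μ₄)) :=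
        lintegral_mono' hle (le_refl _)
    _ = 4 * ∫⁻ x, mk k x ∂(μ₁ + μ₂ + μ₃ + μ₄) := lintegral_smul_measure _ _
    _ < ⊤ := ENNReal.mul_lt_top (by norm_num) hT

/-- Forward: if `pconv p β` is dominated by `cvar d` and `x^k` is `cvar d`-integrable,
then `β` has finite k-th moment. -/
lemma forward_moment (p : Measure ℝ) [IsProbabilityMeasure p] (k : ℕ)
    (hp : ∫⁻ x, mk k x ∂p < ⊤) {β : Measure ℝ} [IsFiniteMeasure β] {d : ComplexMeasure ℝ}
    (hdom : ∀ X : Set ℝ, MeasurableSet X → pconv p β X ≤ cvar d X)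
    (hi : Integrable (fun x : ℝ => (x:ℂ) ^ k) (cvar d)) :
    ∫⁻ x, mk k x ∂β < ⊤ := by
  apply moment_deconv_finite p β k _ hp
  calc ∫⁻ x, mk k x ∂(pconv p β) ≤ ∫⁻ x, mk k x ∂(cvar d) :=
        lintegral_mono' (Measure.le_iff.2 hdom) (le_refl _)
    _ < ⊤ := (integrable_pow_iff _ k).1 hi

lemma cintegrable_parts {f : ℝ → ℂ} {c : ComplexMeasure ℝ} (h : CIntegrable f c) :
    Integrable f (posRe c) ∧ Integrable f (negRe c) ∧
      Integrable f (posIm c) ∧ Integrable f (negIm c) := by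
  unfold CIntegrable cvar at h
  rw [integrable_add_measure, integrable_add_measure, integrable_add_measure] at h
  tauto

/-- Change of representation for the complex integral. -/
lemma cintegral_eq_of_rep {d : ComplexMeasure ℝ} {μ₁ μ₂ μ₃ μ₄ : Measure ℝ}
    [IsFiniteMeasure μ₁] [IsFiniteMeasure μ₂] [IsFiniteMeasure μ₃] [IsFiniteMeasure μ₄]
    (h : Rep d μ₁ μ₂ μ₃ μ₄) {f : ℝ → ℂ}
    (h1 : Integrable f μ₁) (h2 : Integrable f μ₂) (h3 : Integrable f μ₃) (h4 : Integrable f μ₄)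
    (hd : CIntegrable f d) :
    cintegral f d = ((∫ x, f x ∂μ₁) - (∫ x, f x ∂μ₂)) +
      Complex.I * ((∫ x, f x ∂μ₃) - (∫ x, f x ∂μ₄)) := by
  obtain ⟨hp1, hp2, hp3, hp4⟩ := cintegrable_parts hd
  have hre : posRe d + μ₂ = μ₁ + negRe d := by
    ext X hX
    have hX1 := h X hX
    have hre1 : (d X).re = (μ₁ X).toReal - (μ₂ X).toReal := by rw [hX1]; simp
    have hre2 : (d X).re = (posRe d X).toReal - (negRe d X).toReal := re_apply' d hX
    have : (posRe d X).toReal + (μ₂ X).toReal = (μ₁ X).toReal + (negRe d X).toReal := by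
      linarith
    rw [Measure.add_apply, Measure.add_apply]
    rw [← ENNReal.toReal_eq_toReal_iff' (by finiteness) (by finiteness),
      ENNReal.toReal_add (measure_ne_top _ _) (measure_ne_top _ _),
      ENNReal.toReal_add (measure_ne_top _ _) (measure_ne_top _ _)]
    exact this
  have him : posIm d + μ₄ = μ₃ + negIm d := by
    ext X hX
    have hX1 := h X hX
    have him1 : (d X).im = (μ₃ X).toReal - (μ₄ X).toReal := by rw [hX1]; simp
    have him2 : (d X).im = (posIm d X).toReal - (negIm d X).toReal := im_apply' d hX
    have : (posIm d X).toReal + (μ₄ X).toReal = (μ₃ X).toReal + (negIm d X).toReal := by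
      linarith
    rw [Measure.add_apply, Measure.add_apply]
    rw [← ENNReal.toReal_eq_toReal_iff' (by finiteness) (by finiteness),
      ENNReal.toReal_add (measure_ne_top _ _) (measure_ne_top _ _),
      ENNReal.toReal_add (measure_ne_top _ _) (measure_ne_top _ _)]
    exact this
  have ire : (∫ x, f x ∂(posRe d)) + ∫ x, f x ∂μ₂ = (∫ x, f x ∂μ₁) + ∫ x, f x ∂(negRe d) := by
    rw [← integral_add_measure hp1 h2, ← integral_add_measure h1 hp2, hre]
  have iim : (∫ x, f x ∂(posIm d)) + ∫ x, f x ∂μ₄ = (∫ x, f x ∂μ₃) + ∫ x, f x ∂(negIm d) := by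
    rw [← integral_add_measure hp3 h4, ← integral_add_measure h3 hp4, him]
  unfold cintegral
  linear_combination ire + Complex.I * iim

/-- Binomial expansion of the k-th moment of a convolution. -/
lemma integral_pow_pconv (p : Measure ℝ) [IsProbabilityMeasure p] (k : ℕ)
    (β : Measure ℝ) [IsFiniteMeasure β]
    (hβ : ∫⁻ x, mk k x ∂β < ⊤) (hp : ∫⁻ x, mk k x ∂p < ⊤) :
    ∫ x, x ^ k ∂(pconv p β) =
      ∑ n ∈ Finset.range (k+1), (k.choose n : ℝ) * (∫ y, y ^ (k-n) ∂p) * (∫ x, x ^ n ∂β) := by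
  rw [pconv, integral_map (by fun_prop) (Continuous.aestronglyMeasurable (by continuity))]
  rw [show (fun z : ℝ × ℝ => (z.2 + z.1) ^ k) =
      fun z : ℝ × ℝ => ∑ n ∈ Finset.range (k+1), (z.1 ^ (k-n) * z.2 ^ n) * (k.choose n : ℝ) from
    funext fun z => by rw [add_pow]; apply Finset.sum_congr rfl; intros; ring]
  rw [integral_finset_sum _ (fun n hn =>
    ((integrable_pow_real p (Nat.sub_le k n) hp).mul_prod
      (integrable_pow_real β (Nat.le_of_lt_succ (Finset.mem_range.1 hn)) hβ)).mul_const _)]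
  apply Finset.sum_congr rfl
  intro n hn
  rw [integral_mul_const,
    integral_prod_mul (μ := p) (ν := β) (f := fun y : ℝ => y ^ (k-n)) (g := fun x : ℝ => x ^ n)]
  ring


section Operator
variable {Ω : Type*} [MeasurableSpace Ω] {H : Type*}
    [NormedAddCommGroup H] [InnerProductSpace ℂ H] [CompleteSpace H]

lemma ext_of_inner {T S : H →L[ℂ] H} (h : ∀ φ ψ : H, ⟪ψ, T φ⟫ = ⟪ψ, S φ⟫) : T = S := by
  ext φ
  have h0 : ∀ ψ : H, ⟪ψ, T φ - S φ⟫ = 0 := by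
    intro ψ
    rw [inner_sub_right, h φ ψ, sub_self]
  have := h0 (T φ - S φ)
  rw [inner_self_eq_zero] at this
  exact sub_eq_zero.1 this

lemma Semispectral.empty (E : Semispectral Ω H) : E.toFun ∅ = 0 := by
  apply ext_of_inner (S := 0)
  intro φ ψ
  have hw := E.weakly_additive (fun _ => ∅) (fun _ => MeasurableSet.empty)
    (by intro m n hmn; simp [Function.onFun]) φ ψ
  rw [Set.iUnion_empty] at hw
  have hsum : Summable (fun _ : ℕ => ⟪ψ, E.toFun ∅ φ⟫) := hw.summable
  have hzero : ⟪ψ, E.toFun ∅ φ⟫ = 0 := by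
    by_contra hne
    exact hne (tendsto_nhds_unique hsum.tendsto_atTop_zero tendsto_const_nhds).symm
  simpa using hzero

lemma Semispectral.union2 (E : Semispectral Ω H) {X Z : Set Ω}
    (hX : MeasurableSet X) (hZ : MeasurableSet Z) (hdisj : Disjoint X Z) :
    E.toFun (X ∪ Z) = E.toFun X + E.toFun Z := by
  apply ext_of_inner
  intro φ ψ
  set f : ℕ → Set Ω := fun n => if n = 0 then X else if n = 1 then Z else ∅ with hf
  have hmeas : ∀ n, MeasurableSet (f n) := by
    intro n
    rcases n with _ | _ | n <;> simp [hf, hX, hZ]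
  have hpair : Pairwise (Function.onFun Disjoint f) := by
    intro m n hmn
    simp only [Function.onFun, hf]
    split_ifs <;>
      first
        | omega
        | exact hdisj
        | exact hdisj.symm
        | exact Set.disjoint_empty _
        | exact Set.empty_disjoint _
  have hun : (⋃ n, f n) = X ∪ Z := by
    apply Set.Subset.antisymm
    · apply Set.iUnion_subset
      intro n
      rcases n with _ | _ | n <;> simp [hf]
    · intro x hx
      rcases hx with hx | hx
      · exact Set.mem_iUnion.2 ⟨0, by simpa [hf] using hx⟩
      · exact Set.mem_iUnion.2 ⟨1, by simpa [hf] using hx⟩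
  have hw := E.weakly_additive f hmeas hpair φ ψ
  rw [hun] at hw
  have hfn : (fun n => ⟪ψ, E.toFun (f n) φ⟫) =
      (fun n => if n = 0 then ⟪ψ, E.toFun X φ⟫ else 0) +
      (fun n => if n = 1 then ⟪ψ, E.toFun Z φ⟫ else 0) := by
    funext n
    rcases n with _ | _ | n <;> simp [hf, E.empty]
  have hsum2 : HasSum (fun n => ⟪ψ, E.toFun (f n) φ⟫) (⟪ψ, E.toFun X φ⟫ + ⟪ψ, E.toFun Z φ⟫) := by
    rw [hfn]
    exact (hasSum_ite_eq 0 _).add (hasSum_ite_eq 1 _)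
  have := hw.unique hsum2
  rw [ContinuousLinearMap.add_apply, inner_add_right]
  exact this

lemma mul_eq_zero_of_proj {p q : H →L[ℂ] H} (hp : p * p = p) (hq : q * q = q)
    (hr : (p + q) * (p + q) = p + q) : p * q = 0 := by
  have h1 : p * q + q * p = 0 := by
    have hexp : p + (p * q + q * p) + q = p + q := by
      calc p + (p * q + q * p) + q = p * p + (p * q + q * p) + q * q := by rw [hp, hq]
        _ = (p + q) * (p + q) := by noncomm_ring
        _ = p + q := hr
    have h1' : p + (p * q + q * p) = p := add_right_cancel hexp
    exact (add_eq_left).1 h1'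
  have h2 : p * q + p * q * p = 0 := by
    have := congrArg (fun x => p * x) h1
    simpa [mul_add, ← mul_assoc, hp] using this
  have h3 : p * q * p + q * p = 0 := by
    have := congrArg (fun x => x * p) h1
    simpa [add_mul, mul_assoc, hp] using this
  have h4 : p * q = q * p := by
    rw [eq_neg_of_add_eq_zero_left h2, eq_neg_of_add_eq_zero_right h3]
  have h5 : (2 : ℂ) • (p * q) = 0 := by
    rw [two_smul]
    calc p * q + p * q = p * q + q * p := by rw [h4]
      _ = 0 := h1
  have := smul_eq_zero.1 h5
  rcases this with h | h
  · norm_num at h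
  · exact h

lemma Semispectral.mul_disjoint (E : Semispectral Ω H) (hE : E.IsSpectral) {X Z : Set Ω}
    (hX : MeasurableSet X) (hZ : MeasurableSet Z) (hdisj : Disjoint X Z) :
    E.toFun X * E.toFun Z = 0 := by
  apply mul_eq_zero_of_proj (hE X hX) (hE Z hZ)
  have h := hE (X ∪ Z) (hX.union hZ)
  rw [E.union2 hX hZ hdisj] at h
  exact h

lemma Semispectral.mul_inter (E : Semispectral Ω H) (hE : E.IsSpectral) {X Z : Set Ω}
    (hX : MeasurableSet X) (hZ : MeasurableSet Z) :
    E.toFun X * E.toFun Z = E.toFun (X ∩ Z) := by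
  have hXd : E.toFun X = E.toFun (X ∩ Z) + E.toFun (X \ Z) := by
    rw [← E.union2 (hX.inter hZ) (hX.diff hZ)
      (Set.disjoint_left.2 fun a ha hb => hb.2 ha.2), Set.inter_union_diff]
  have hZd : E.toFun Z = E.toFun (X ∩ Z) + E.toFun (Z \ X) := by
    have hu : (X ∩ Z) ∪ (Z \ X) = Z := by
      rw [Set.inter_comm, Set.inter_union_diff]
    rw [← E.union2 (hX.inter hZ) (hZ.diff hX)
      (Set.disjoint_left.2 fun a ha hb => hb.2 ha.1), hu]
  have hA : E.toFun (X ∩ Z) * E.toFun (X ∩ Z) = E.toFun (X ∩ Z) := hE _ (hX.inter hZ)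
  have o1 : E.toFun (X ∩ Z) * E.toFun (Z \ X) = 0 :=
    E.mul_disjoint hE (hX.inter hZ) (hZ.diff hX)
      (Set.disjoint_left.2 fun a ha hb => hb.2 ha.1)
  have o2 : E.toFun (X \ Z) * E.toFun (X ∩ Z) = 0 :=
    E.mul_disjoint hE (hX.diff hZ) (hX.inter hZ)
      (Set.disjoint_left.2 fun a ha hb => ha.2 hb.2)
  have o3 : E.toFun (X \ Z) * E.toFun (Z \ X) = 0 :=
    E.mul_disjoint hE (hX.diff hZ) (hZ.diff hX)
      (Set.disjoint_left.2 fun a ha hb => hb.2 ha.1)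
  calc E.toFun X * E.toFun Z
      = (E.toFun (X ∩ Z) + E.toFun (X \ Z)) * (E.toFun (X ∩ Z) + E.toFun (Z \ X)) := by
        rw [← hXd, ← hZd]
    _ = E.toFun (X ∩ Z) * E.toFun (X ∩ Z) + E.toFun (X ∩ Z) * E.toFun (Z \ X)
        + (E.toFun (X \ Z) * E.toFun (X ∩ Z) + E.toFun (X \ Z) * E.toFun (Z \ X)) := by
        noncomm_ring
    _ = E.toFun (X ∩ Z) := by rw [hA, o1, o2, o3]; simp

lemma Semispectral.inner_mul (E : Semispectral Ω H) (hE : E.IsSpectral) {Y W : Set Ω}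
    (hY : MeasurableSet Y) (hW : MeasurableSet W) (ψ φ : H) :
    ⟪E.toFun Y ψ, E.toFun W φ⟫ = ⟪ψ, E.toFun (Y ∩ W) φ⟫ := by
  have hsym := ((E.pos Y hY).isSelfAdjoint).isSymmetric
  calc ⟪E.toFun Y ψ, E.toFun W φ⟫ = ⟪ψ, E.toFun Y (E.toFun W φ)⟫ := hsym _ _
    _ = ⟪ψ, (E.toFun Y * E.toFun W) φ⟫ := rfl
    _ = ⟪ψ, E.toFun (Y ∩ W) φ⟫ := by rw [E.mul_inter hE hY hW]


end Operator

lemma measurable_shift (μ : Measure ℝ) [SFinite μ] {X : Set ℝ} (hX : MeasurableSet X) :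
    Measurable (fun y : ℝ => μ {x | x + y ∈ X}) := by
  have hS : MeasurableSet {z : ℝ × ℝ | z.2 + z.1 ∈ X} :=
    hX.preimage (by fun_prop)
  exact measurable_measure_prodMk_left hS

lemma integrable_toReal_shift (p : Measure ℝ) [IsProbabilityMeasure p]
    (μ : Measure ℝ) [IsFiniteMeasure μ] {X : Set ℝ} (hX : MeasurableSet X) :
    Integrable (fun y => (μ {x | x + y ∈ X}).toReal) p := by
  apply Integrable.mono' (integrable_const ((μ Set.univ).toReal))
    ((measurable_shift μ hX).ennreal_toReal.aestronglyMeasurable)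
  apply ae_of_all
  intro y
  rw [Real.norm_eq_abs, abs_of_nonneg ENNReal.toReal_nonneg]
  exact ENNReal.toReal_mono (measure_ne_top _ _) (measure_mono (Set.subset_univ _))

lemma integral_toReal_shift (p : Measure ℝ) [IsProbabilityMeasure p]
    (μ : Measure ℝ) [IsFiniteMeasure μ] {X : Set ℝ} (hX : MeasurableSet X) :
    ∫ y, (μ {x | x + y ∈ X}).toReal ∂p = (pconv p μ X).toReal := by
  rw [pconv_apply p μ hX]
  rw [integral_toReal ((measurable_shift μ hX).aemeasurable)
    (ae_of_all _ (fun y => measure_lt_top _ _))]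

lemma ofReal_re_le_cvar (d : ComplexMeasure ℝ) {X : Set ℝ} (hX : MeasurableSet X) :
    ENNReal.ofReal ((d X).re) ≤ cvar d X := by
  rw [re_apply' d hX]
  calc ENNReal.ofReal ((posRe d X).toReal - (negRe d X).toReal)
      ≤ ENNReal.ofReal ((posRe d X).toReal) :=
        ENNReal.ofReal_le_ofReal (sub_le_self _ ENNReal.toReal_nonneg)
    _ = posRe d X := ENNReal.ofReal_toReal (measure_ne_top _ _)
    _ ≤ cvar d X := by
        unfold cvar
        simp only [Measure.add_apply]
        exact le_add_right (le_add_right (le_add_right (le_refl _)))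

lemma ofReal_neg_re_le_cvar (d : ComplexMeasure ℝ) {X : Set ℝ} (hX : MeasurableSet X) :
    ENNReal.ofReal (-(d X).re) ≤ cvar d X := by
  rw [re_apply' d hX]
  calc ENNReal.ofReal (-((posRe d X).toReal - (negRe d X).toReal))
      ≤ ENNReal.ofReal ((negRe d X).toReal) := by
        apply ENNReal.ofReal_le_ofReal
        have := ENNReal.toReal_nonneg (a := posRe d X)
        linarith
    _ = negRe d X := ENNReal.ofReal_toReal (measure_ne_top _ _)
    _ ≤ cvar d X := by
        unfold cvar
        simp only [Measure.add_apply]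
        exact le_add_right (le_add_right (le_add_left (le_refl _)))

lemma ofReal_im_le_cvar (d : ComplexMeasure ℝ) {X : Set ℝ} (hX : MeasurableSet X) :
    ENNReal.ofReal ((d X).im) ≤ cvar d X := by
  rw [im_apply' d hX]
  calc ENNReal.ofReal ((posIm d X).toReal - (negIm d X).toReal)
      ≤ ENNReal.ofReal ((posIm d X).toReal) :=
        ENNReal.ofReal_le_ofReal (sub_le_self _ ENNReal.toReal_nonneg)
    _ = posIm d X := ENNReal.ofReal_toReal (measure_ne_top _ _)
    _ ≤ cvar d X := by
        unfold cvar
        simp only [Measure.add_apply]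
        exact le_add_right (le_add_left (le_refl _))

lemma ofReal_neg_im_le_cvar (d : ComplexMeasure ℝ) {X : Set ℝ} (hX : MeasurableSet X) :
    ENNReal.ofReal (-(d X).im) ≤ cvar d X := by
  rw [im_apply' d hX]
  calc ENNReal.ofReal (-((posIm d X).toReal - (negIm d X).toReal))
      ≤ ENNReal.ofReal ((negIm d X).toReal) := by
        apply ENNReal.ofReal_le_ofReal
        have := ENNReal.toReal_nonneg (a := posIm d X)
        linarith
    _ = negIm d X := ENNReal.ofReal_toReal (measure_ne_top _ _)
    _ ≤ cvar d X := le_add_left (le_refl _)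

lemma cintegrable_of_moments (c : ComplexMeasure ℝ) (k : ℕ)
    (h1 : ∫⁻ x, mk k x ∂(posRe c) < ⊤) (h2 : ∫⁻ x, mk k x ∂(negRe c) < ⊤)
    (h3 : ∫⁻ x, mk k x ∂(posIm c) < ⊤) (h4 : ∫⁻ x, mk k x ∂(negIm c) < ⊤) :
    CIntegrable (fun x : ℝ => (x:ℂ) ^ k) c := by
  unfold CIntegrable
  rw [integrable_pow_iff]
  unfold cvar
  rw [lintegral_add_measure, lintegral_add_measure, lintegral_add_measure]
  exact ENNReal.add_lt_top.2 ⟨ENNReal.add_lt_top.2 ⟨ENNReal.add_lt_top.2 ⟨h1, h2⟩, h3⟩, h4⟩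

lemma moments_of_cintegrable {c : ComplexMeasure ℝ} {k : ℕ}
    (h : CIntegrable (fun x : ℝ => (x:ℂ) ^ k) c) :
    ∫⁻ x, mk k x ∂(posRe c) < ⊤ ∧ ∫⁻ x, mk k x ∂(negRe c) < ⊤ ∧
    ∫⁻ x, mk k x ∂(posIm c) < ⊤ ∧ ∫⁻ x, mk k x ∂(negIm c) < ⊤ := by
  obtain ⟨h1, h2, h3, h4⟩ := cintegrable_parts h
  exact ⟨(integrable_pow_iff _ k).1 h1, (integrable_pow_iff _ k).1 h2,
    (integrable_pow_iff _ k).1 h3, (integrable_pow_iff _ k).1 h4⟩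

lemma integral_ofReal' (μ : Measure ℝ) (g : ℝ → ℝ) :
    ∫ x, ((g x : ℝ) : ℂ) ∂μ = ((∫ x, g x ∂μ : ℝ) : ℂ) := integral_ofReal


/-- for selfadjoint `A`, `B` with spectral measures `EA`, `EB`, a positive
trace-one `T` with `√|A|^k √T` Hilbert–Schmidt (i.e. the `k`-th moment of
`p = p_T^A` exists), the convolved semispectral measure `F = p_T^A * E^B` has
`L(x^k, F) = ∑ C(k,n) p_T^A[k-n] Bⁿ` with domain `D(B^k)`.  As `EB` is spectral,
`D(B^k) = D(x^k, EB)` and `⟪ψ, Bⁿφ⟫ = ∫ xⁿ d(EB)_{ψ,φ}`. -/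
theorem moment_conv_pTA {ι : Type*}
    (EA EB F : Semispectral ℝ H) (hEA : EA.IsSpectral) (hEB : EB.IsSpectral)
    (b : HilbertBasis ι ℂ H)
    (T S : H →L[ℂ] H) (hT : T.IsPositive) (hS : S.IsPositive) (hST : S.comp S = T)
    (htr : (∑' i, ENNReal.ofReal (⟪b i, T (b i)⟫.re)) = 1)
    (mA : H → Measure ℝ)
    (hmA : ∀ (ψ : H) (X : Set ℝ), MeasurableSet X →
      mA ψ X = ENNReal.ofReal (⟪ψ, EA.toFun X ψ⟫.re))
    (p : Measure ℝ) [IsProbabilityMeasure p]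
    (hp : ∀ X : Set ℝ, MeasurableSet X → p X = ∑' i, mA (S (b i)) X)
    (k : ℕ)
    (hHS : (∑' i, ∫⁻ x, ENNReal.ofReal (|x| ^ k) ∂(mA (S (b i)))) < ⊤)
    (hF : ∀ X : Set ℝ, MeasurableSet X → ∀ φ ψ : H,
      ⟪ψ, F.toFun X φ⟫ = ∫ y, ⟪ψ, EB.toFun {x : ℝ | x + y ∈ X} φ⟫ ∂p)
    (cB cF : H → H → ComplexMeasure ℝ)
    (hcB : ∀ (ψ φ : H) (X : Set ℝ), MeasurableSet X → cB ψ φ X = ⟪ψ, EB.toFun X φ⟫)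
    (hcF : ∀ (ψ φ : H) (X : Set ℝ), MeasurableSet X → cF ψ φ X = ⟪ψ, F.toFun X φ⟫) :
    ∀ φ : H,
      ((∀ ψ : H, CIntegrable (fun x : ℝ => (x : ℂ) ^ k) (cF ψ φ)) ↔
        (∀ ψ : H, CIntegrable (fun x : ℝ => (x : ℂ) ^ k) (cB ψ φ))) ∧
      ((∀ ψ : H, CIntegrable (fun x : ℝ => (x : ℂ) ^ k) (cB ψ φ)) →
        ∀ ψ : H, cintegral (fun x : ℝ => (x : ℂ) ^ k) (cF ψ φ) =
          ∑ n ∈ Finset.range (k + 1), (k.choose n : ℂ) *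
            ((∫ x, x ^ (k - n) ∂p : ℝ) : ℂ) *
            cintegral (fun x : ℝ => (x : ℂ) ^ n) (cB ψ φ)) := by
  classical
  -- the k-th moment of p is finite
  have hpsum : p = Measure.sum (fun i => mA (S (b i))) := by
    ext X hX
    rw [hp X hX, Measure.sum_apply _ hX]
  have hMp : ∫⁻ x, mk k x ∂p < ⊤ := by
    rw [hpsum, lintegral_sum_measure]
    exact hHS
  intro φ
  -- the master representation of the complex measures cF (EB Y ψ) φ
  have hrep : ∀ ψ : H, ∀ Y : Set ℝ, MeasurableSet Y →
      Rep (cF (EB.toFun Y ψ) φ)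
        (pconv p ((posRe (cB ψ φ)).restrict Y)) (pconv p ((negRe (cB ψ φ)).restrict Y))
        (pconv p ((posIm (cB ψ φ)).restrict Y)) (pconv p ((negIm (cB ψ φ)).restrict Y)) := by
    intro ψ Y hY X hX
    rw [hcF _ _ X hX, hF X hX φ (EB.toFun Y ψ)]
    have hint : ∀ y : ℝ, ⟪EB.toFun Y ψ, EB.toFun {x : ℝ | x + y ∈ X} φ⟫ =
        ((((posRe (cB ψ φ)).restrict Y) {x : ℝ | x + y ∈ X}).toReal
          - (((negRe (cB ψ φ)).restrict Y) {x : ℝ | x + y ∈ X}).toReal : ℝ) +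
        ((((posIm (cB ψ φ)).restrict Y) {x : ℝ | x + y ∈ X}).toReal
          - (((negIm (cB ψ φ)).restrict Y) {x : ℝ | x + y ∈ X}).toReal : ℝ) * Complex.I := by
      intro y
      have hZ : MeasurableSet {x : ℝ | x + y ∈ X} := hX.preimage (by fun_prop)
      rw [EB.inner_mul hEB hY hZ, ← hcB ψ φ _ (hY.inter hZ), cm_apply _ (hY.inter hZ)]
      simp only [Measure.restrict_apply hZ]
      rw [Set.inter_comm Y]
    rw [integral_congr_ae (ae_of_all _ hint)]
    have i1 := integrable_toReal_shift p ((posRe (cB ψ φ)).restrict Y) hX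
    have i2 := integrable_toReal_shift p ((negRe (cB ψ φ)).restrict Y) hX
    have i3 := integrable_toReal_shift p ((posIm (cB ψ φ)).restrict Y) hX
    have i4 := integrable_toReal_shift p ((negIm (cB ψ φ)).restrict Y) hX
    have i12 : Integrable (fun y : ℝ => (((((posRe (cB ψ φ)).restrict Y) {x : ℝ | x + y ∈ X}).toReal
          - (((negRe (cB ψ φ)).restrict Y) {x : ℝ | x + y ∈ X}).toReal : ℝ) : ℂ)) p :=
      (i1.sub i2).ofReal
    have i34I : Integrable (fun y : ℝ => (((((posIm (cB ψ φ)).restrict Y) {x : ℝ | x + y ∈ X}).toReal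
          - (((negIm (cB ψ φ)).restrict Y) {x : ℝ | x + y ∈ X}).toReal : ℝ) : ℂ) * Complex.I) p :=
      ((i3.sub i4).ofReal).mul_const _
    rw [integral_add i12 i34I,
      integral_mul_const, integral_ofReal' p _, integral_ofReal' p _,
      integral_sub i1 i2, integral_sub i3 i4,
      integral_toReal_shift p _ hX, integral_toReal_shift p _ hX,
      integral_toReal_shift p _ hX, integral_toReal_shift p _ hX]
  -- backward direction: cB integrable → cF integrable (fixed ψ)
  have hback : ∀ ψ : H, CIntegrable (fun x : ℝ => (x : ℂ) ^ k) (cB ψ φ) →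
      CIntegrable (fun x : ℝ => (x : ℂ) ^ k) (cF ψ φ) := by
    intro ψ hcb
    obtain ⟨m1, m2, m3, m4⟩ := moments_of_cintegrable hcb
    have huniv : EB.toFun Set.univ ψ = ψ := by
      rw [EB.norm_univ]; rfl
    have hrepu := hrep ψ Set.univ MeasurableSet.univ
    rw [huniv] at hrepu
    simp only [Measure.restrict_univ] at hrepu
    exact rep_integrable hrepu k
      (moment_pconv_finite p _ k m1 hMp) (moment_pconv_finite p _ k m2 hMp)
      (moment_pconv_finite p _ k m3 hMp) (moment_pconv_finite p _ k m4 hMp)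
  constructor
  · constructor
    · -- forward: all cF integrable → all cB integrable
      intro hcf ψ
      set c := cB ψ φ with hc
      obtain ⟨i, hi, hich⟩ := hahn_char (ComplexMeasure.re c)
      obtain ⟨j, hj, hjch⟩ := hahn_char (ComplexMeasure.im c)
      -- restriction identities
      have hri1 : (posRe c).restrict i = posRe c := by
        ext X hX
        rw [Measure.restrict_apply hX, posRe, (hich _ (hX.inter hi)).1, (hich _ hX).1]
        congr 1
        rw [Set.inter_comm X i, ← Set.inter_assoc, Set.inter_self]
      have hri2 : (negRe c).restrict i = 0 := by
        ext X hX
        rw [Measure.restrict_apply hX, negRe, (hich _ (hX.inter hi)).2]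
        have he : iᶜ ∩ (X ∩ i) = ∅ := by
          ext x; simp only [Set.mem_inter_iff, Set.mem_compl_iff, Set.mem_empty_iff_false]
          tauto
        rw [he]
        simp
      have hri2' : (negRe c).restrict iᶜ = negRe c := by
        ext X hX
        rw [Measure.restrict_apply hX, negRe, (hich _ (hX.inter hi.compl)).2, (hich _ hX).2]
        congr 2
        rw [Set.inter_comm X iᶜ, ← Set.inter_assoc, Set.inter_self]
      have hri1' : (posRe c).restrict iᶜ = 0 := by
        ext X hX
        rw [Measure.restrict_apply hX, posRe, (hich _ (hX.inter hi.compl)).1]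
        have he : i ∩ (X ∩ iᶜ) = ∅ := by
          ext x; simp only [Set.mem_inter_iff, Set.mem_compl_iff, Set.mem_empty_iff_false]
          tauto
        rw [he]
        simp
      have hrj1 : (posIm c).restrict j = posIm c := by
        ext X hX
        rw [Measure.restrict_apply hX, posIm, (hjch _ (hX.inter hj)).1, (hjch _ hX).1]
        congr 1
        rw [Set.inter_comm X j, ← Set.inter_assoc, Set.inter_self]
      have hrj2 : (negIm c).restrict j = 0 := by
        ext X hX
        rw [Measure.restrict_apply hX, negIm, (hjch _ (hX.inter hj)).2]
        have he : jᶜ ∩ (X ∩ j) = ∅ := by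
          ext x; simp only [Set.mem_inter_iff, Set.mem_compl_iff, Set.mem_empty_iff_false]
          tauto
        rw [he]
        simp
      have hrj2' : (negIm c).restrict jᶜ = negIm c := by
        ext X hX
        rw [Measure.restrict_apply hX, negIm, (hjch _ (hX.inter hj.compl)).2, (hjch _ hX).2]
        congr 2
        rw [Set.inter_comm X jᶜ, ← Set.inter_assoc, Set.inter_self]
      have hrj1' : (posIm c).restrict jᶜ = 0 := by
        ext X hX
        rw [Measure.restrict_apply hX, posIm, (hjch _ (hX.inter hj.compl)).1]
        have he : j ∩ (X ∩ jᶜ) = ∅ := by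
          ext x; simp only [Set.mem_inter_iff, Set.mem_compl_iff, Set.mem_empty_iff_false]
          tauto
        rw [he]
        simp
      -- four applications of the forward core lemma
      have m1 : ∫⁻ x, mk k x ∂(posRe c) < ⊤ := by
        set d := cF (EB.toFun i ψ) φ with hd
        have hrepd := hrep ψ i hi
        rw [hri1, hri2] at hrepd
        apply forward_moment p k hMp (d := d) _ (hcf (EB.toFun i ψ))
        intro X hX
        have hdx := hrepd X hX
        rw [pconv_zero] at hdx
        have hre : (d X).re = (pconv p (posRe c) X).toReal := by
          rw [hdx]; simp
        calc pconv p (posRe c) X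
            = ENNReal.ofReal ((pconv p (posRe c) X).toReal) :=
              (ENNReal.ofReal_toReal (measure_ne_top _ _)).symm
          _ = ENNReal.ofReal ((d X).re) := by rw [hre]
          _ ≤ cvar d X := ofReal_re_le_cvar d hX
      have m2 : ∫⁻ x, mk k x ∂(negRe c) < ⊤ := by
        set d := cF (EB.toFun iᶜ ψ) φ with hd
        have hrepd := hrep ψ iᶜ hi.compl
        rw [hri2', hri1'] at hrepd
        apply forward_moment p k hMp (d := d) _ (hcf (EB.toFun iᶜ ψ))
        intro X hX
        have hdx := hrepd X hX
        rw [pconv_zero] at hdx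
        have hre : (d X).re = -(pconv p (negRe c) X).toReal := by
          rw [hdx]; simp
        calc pconv p (negRe c) X
            = ENNReal.ofReal ((pconv p (negRe c) X).toReal) :=
              (ENNReal.ofReal_toReal (measure_ne_top _ _)).symm
          _ = ENNReal.ofReal (-(d X).re) := by rw [hre, neg_neg]
          _ ≤ cvar d X := ofReal_neg_re_le_cvar d hX
      have m3 : ∫⁻ x, mk k x ∂(posIm c) < ⊤ := by
        set d := cF (EB.toFun j ψ) φ with hd
        have hrepd := hrep ψ j hj
        rw [hrj1, hrj2] at hrepd
        apply forward_moment p k hMp (d := d) _ (hcf (EB.toFun j ψ))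
        intro X hX
        have hdx := hrepd X hX
        rw [pconv_zero] at hdx
        have him : (d X).im = (pconv p (posIm c) X).toReal := by
          rw [hdx]; simp
        calc pconv p (posIm c) X
            = ENNReal.ofReal ((pconv p (posIm c) X).toReal) :=
              (ENNReal.ofReal_toReal (measure_ne_top _ _)).symm
          _ = ENNReal.ofReal ((d X).im) := by rw [him]
          _ ≤ cvar d X := ofReal_im_le_cvar d hX
      have m4 : ∫⁻ x, mk k x ∂(negIm c) < ⊤ := by
        set d := cF (EB.toFun jᶜ ψ) φ with hd
        have hrepd := hrep ψ jᶜ hj.compl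
        rw [hrj2', hrj1'] at hrepd
        apply forward_moment p k hMp (d := d) _ (hcf (EB.toFun jᶜ ψ))
        intro X hX
        have hdx := hrepd X hX
        rw [pconv_zero] at hdx
        have him : (d X).im = -(pconv p (negIm c) X).toReal := by
          rw [hdx]; simp
        calc pconv p (negIm c) X
            = ENNReal.ofReal ((pconv p (negIm c) X).toReal) :=
              (ENNReal.ofReal_toReal (measure_ne_top _ _)).symm
          _ = ENNReal.ofReal (-(d X).im) := by rw [him, neg_neg]
          _ ≤ cvar d X := ofReal_neg_im_le_cvar d hX
      exact cintegrable_of_moments c k m1 m2 m3 m4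
    · intro hcb ψ
      exact hback ψ (hcb ψ)
  · -- the moment formula
    intro hcb ψ
    set c := cB ψ φ with hc
    obtain ⟨m1, m2, m3, m4⟩ := moments_of_cintegrable (hcb ψ)
    have huniv : EB.toFun Set.univ ψ = ψ := by
      rw [EB.norm_univ]; rfl
    have hrepu := hrep ψ Set.univ MeasurableSet.univ
    rw [huniv] at hrepu
    simp only [Measure.restrict_univ] at hrepu
    have h1 : Integrable (fun x : ℝ => (x:ℂ) ^ k) (pconv p (posRe c)) :=
      (integrable_pow_iff _ k).2 (moment_pconv_finite p _ k m1 hMp)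
    have h2 : Integrable (fun x : ℝ => (x:ℂ) ^ k) (pconv p (negRe c)) :=
      (integrable_pow_iff _ k).2 (moment_pconv_finite p _ k m2 hMp)
    have h3 : Integrable (fun x : ℝ => (x:ℂ) ^ k) (pconv p (posIm c)) :=
      (integrable_pow_iff _ k).2 (moment_pconv_finite p _ k m3 hMp)
    have h4 : Integrable (fun x : ℝ => (x:ℂ) ^ k) (pconv p (negIm c)) :=
      (integrable_pow_iff _ k).2 (moment_pconv_finite p _ k m4 hMp)
    have hd : CIntegrable (fun x : ℝ => (x : ℂ) ^ k) (cF ψ φ) := hback ψ (hcb ψ)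
    rw [cintegral_eq_of_rep hrepu h1 h2 h3 h4 hd]
    -- rewrite each complex integral as a real one
    have hcoe : (fun x : ℝ => (x:ℂ) ^ k) = fun x : ℝ => ((x ^ k : ℝ) : ℂ) := by
      funext x; push_cast; ring
    have hint : ∀ (μ : Measure ℝ), ∫ x, (x:ℂ) ^ k ∂μ = ((∫ x, x ^ k ∂μ : ℝ) : ℂ) := by
      intro μ
      rw [hcoe, integral_ofReal' _ _]
    have hintn : ∀ (n : ℕ) (μ : Measure ℝ), ∫ x, (x:ℂ) ^ n ∂μ = ((∫ x, x ^ n ∂μ : ℝ) : ℂ) := by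
      intro n μ
      rw [show (fun x : ℝ => (x:ℂ) ^ n) = fun x : ℝ => ((x ^ n : ℝ) : ℂ) from
        funext fun x => by push_cast; ring, integral_ofReal' _ _]
    rw [hint, hint, hint, hint,
      integral_pow_pconv p k _ m1 hMp, integral_pow_pconv p k _ m2 hMp,
      integral_pow_pconv p k _ m3 hMp, integral_pow_pconv p k _ m4 hMp]
    have hcint : ∀ n : ℕ, cintegral (fun x : ℝ => (x : ℂ) ^ n) c =
        (((∫ x, x ^ n ∂(posRe c) : ℝ) : ℂ) - ((∫ x, x ^ n ∂(negRe c) : ℝ) : ℂ)) +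
          Complex.I * (((∫ x, x ^ n ∂(posIm c) : ℝ) : ℂ) - ((∫ x, x ^ n ∂(negIm c) : ℝ) : ℂ)) := by
      intro n
      unfold cintegral
      rw [hintn, hintn, hintn, hintn]
    simp only [hcint]
    push_cast
    rw [← Finset.sum_sub_distrib, ← Finset.sum_sub_distrib, Finset.mul_sum,
      ← Finset.sum_add_distrib]
    apply Finset.sum_congr rfl
    intro n hn
    ring

end Paper
end
end
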